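/- arXiv:2309.13764 — 2 statements merged into one kernel-verified Lean document; each statement's English description precedes it below -/
import Mathlib

section
/- Define, for a partition λ of n, the polynomial P_λ(t) = Σ_{σ ∈ RST(λ)} t^{|inv(σ)|} (sum over row-strict tableaux of shape λ), and Q_μ(t) = Σ_{σ ∈ IRST(μ)} t^{|inv(σ)|} (sum over indivisible row-strict tableaux, i.e., those with maximal divisor 1). Then P_λ(t) = Σ_{d | λ} t^{D_{λ,d}} Q_{λ/d}(t), where the sum is over positive integers d dividing every part of λ and D_{λ,d} = ((d−1)/d)Σ_i(i−1)λ_i. -/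
open scoped Classical

/-- The set of boxes (row, column), 0-indexed, of the Young diagram of a partition given
as a list of row lengths. -/
def cells (L : List ℕ) : Set (ℕ × ℕ) := {p | p.1 < L.length ∧ p.2 < L.getD p.1 0}

/-- `pos` encodes a tableau of shape `L` with entries `1, …, n`:  `pos i` is the (row,
column) of the box labeled `i`.  It is injective on `{1,…,n}` with image the set of
boxes, and is normalized to `(0,0)` outside `{1,…,n}`. -/
def IsTab (L : List ℕ) (n : ℕ) (pos : ℕ → ℕ × ℕ) : Prop :=
  Set.InjOn pos (Set.Icc 1 n) ∧ pos '' Set.Icc 1 n = cells L ∧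
    ∀ i, i ∉ Set.Icc 1 n → pos i = (0, 0)

/-- Row-strictness: entries increase along each row (left to right). -/
def RowStrict (n : ℕ) (pos : ℕ → ℕ × ℕ) : Prop :=
  ∀ i j, i ∈ Set.Icc 1 n → j ∈ Set.Icc 1 n →
    (pos j).1 = (pos i).1 → (pos j).2 = (pos i).2 + 1 → i < j

/-- A row-strict tableau of shape `L` with entries `1, …, n`. -/
def IsRST (L : List ℕ) (n : ℕ) (pos : ℕ → ℕ × ℕ) : Prop :=
  IsTab L n pos ∧ RowStrict n pos

/-- `(i, j)` with `i > j` is a Springer pair: `i` lies in the same column as `j` or in a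
column strictly to its left, and if the box directly right of `j` is labeled `r` then
`i < r`. -/
def SpringerPair (n : ℕ) (pos : ℕ → ℕ × ℕ) (i j : ℕ) : Prop :=
  1 ≤ j ∧ j < i ∧ i ≤ n ∧ (pos i).2 ≤ (pos j).2 ∧
    ∀ r ∈ Set.Icc 1 n, pos r = ((pos j).1, (pos j).2 + 1) → i < r

/-- A Springer inversion is a Springer pair `(i, j)` such that if `i` is in the same
column as `j` then `i` lies strictly below `j`. -/
def SpringerInv (n : ℕ) (pos : ℕ → ℕ × ℕ) (i j : ℕ) : Prop :=
  SpringerPair n pos i j ∧ ((pos i).2 = (pos j).2 → (pos j).1 < (pos i).1)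

/-- The number of Springer pairs of a tableau. -/
noncomputable def pairsCount (n : ℕ) (pos : ℕ → ℕ × ℕ) : ℕ :=
  {p : ℕ × ℕ | SpringerPair n pos p.1 p.2}.ncard

/-- The number of Springer inversions of a tableau. -/
noncomputable def invCount (n : ℕ) (pos : ℕ → ℕ × ℕ) : ℕ :=
  {p : ℕ × ℕ | SpringerInv n pos p.1 p.2}.ncard

/-- `d` is a divisor of the tableau: `d ∣ n` and the tableau decomposes into blocks of
`d` consecutive boxes with consecutive labels, i.e. whenever `d ∤ i` the box labeled
`i + 1` is directly to the right of the box labeled `i`. -/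
def TabDivisor (n d : ℕ) (pos : ℕ → ℕ × ℕ) : Prop :=
  d ∣ n ∧ ∀ i, 1 ≤ i → i < n → ¬ d ∣ i → pos (i + 1) = ((pos i).1, (pos i).2 + 1)

/-- The quotient tableau `σ/d`: each block of `d` boxes is merged into a single box,
labeled in the same relative order (the block containing `d·m` gets label `m`). -/
def quotTab (d : ℕ) (pos : ℕ → ℕ × ℕ) : ℕ → ℕ × ℕ :=
  fun m => ((pos (d * m)).1, ((pos (d * m)).2 + 1) / d - 1)

/-- `Σ_i (i−1)·λ_i`, the dimension of the Springer fiber of Jordan type `λ`. -/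
def dimB (L : List ℕ) : ℕ := ∑ i ∈ Finset.range L.length, i * L.getD i 0

/-- `L` is a partition of `n`: weakly decreasing positive parts summing to `n`. -/
def IsPartition (L : List ℕ) (n : ℕ) : Prop :=
  L.sum = n ∧ L.Pairwise (· ≥ ·) ∧ ∀ x ∈ L, 0 < x

/-- The generating polynomial `P_λ(t) = Σ_{σ ∈ RST(λ)} t^{|inv(σ)|}` over all row-strict
tableaux of shape `L` (with entries `1,…,n`). -/
noncomputable def Ppoly (L : List ℕ) (n : ℕ) : Polynomial ℤ :=
  ∑ᶠ σ ∈ {σ : ℕ → ℕ × ℕ | IsRST L n σ}, Polynomial.X ^ invCount n σ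

/-- The generating polynomial `Q_μ(t) = Σ_{σ ∈ IRST(μ)} t^{|inv(σ)|}` over indivisible
row-strict tableaux (maximal divisor `1`). -/
noncomputable def Qpoly (L : List ℕ) (n : ℕ) : Polynomial ℤ :=
  ∑ᶠ σ ∈ {σ : ℕ → ℕ × ℕ | IsRST L n σ ∧ ∀ e, 0 < e → TabDivisor n e σ → e = 1},
    Polynomial.X ^ invCount n σ


/-! ### Basic lemmas -/

section Basic

variable {L : List ℕ} {n : ℕ} {σ : ℕ → ℕ × ℕ}

lemma IsTab.mem_cells (h : IsTab L n σ) {i : ℕ} (hi : i ∈ Set.Icc 1 n) :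
    σ i ∈ cells L := h.2.1 ▸ Set.mem_image_of_mem σ hi

lemma IsTab.surj (h : IsTab L n σ) {c : ℕ × ℕ} (hc : c ∈ cells L) :
    ∃ i ∈ Set.Icc 1 n, σ i = c := by
  have := h.2.1.symm ▸ hc
  obtain ⟨i, hi, hσi⟩ := this
  exact ⟨i, hi, hσi⟩

/-- the label of a cell -/
noncomputable def lab (n : ℕ) (σ : ℕ → ℕ × ℕ) (c : ℕ × ℕ) : ℕ :=
  if h : ∃ i ∈ Set.Icc 1 n, σ i = c then h.choose else 0

lemma lab_spec (h : IsTab L n σ) {c : ℕ × ℕ} (hc : c ∈ cells L) :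
    lab n σ c ∈ Set.Icc 1 n ∧ σ (lab n σ c) = c := by
  have he := h.surj hc
  rw [lab, dif_pos he]
  exact ⟨he.choose_spec.1, he.choose_spec.2⟩

lemma lab_apply (h : IsTab L n σ) {i : ℕ} (hi : i ∈ Set.Icc 1 n) :
    lab n σ (σ i) = i := by
  have hs := lab_spec h (h.mem_cells hi)
  exact h.1 hs.1 hi hs.2

/-- cells to the left of a cell are cells -/
lemma cells_left {p c c' : ℕ} (h : (p, c) ∈ cells L) (hc : c' ≤ c) : (p, c') ∈ cells L :=
  ⟨h.1, lt_of_le_of_lt hc h.2⟩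

/-- labels strictly increase along a row -/
lemma IsRST.row_mono (h : IsRST L n σ) : ∀ c, ∀ i ∈ Set.Icc 1 n, ∀ j ∈ Set.Icc 1 n,
    (σ j).2 = c → (σ j).1 = (σ i).1 → (σ i).2 < (σ j).2 → i < j := by
  intro c
  induction c using Nat.strong_induction_on with
  | _ c IH =>
    intro i hi j hj hc hrow hlt
    rcases Nat.lt_or_ge ((σ i).2 + 1) (σ j).2 with hcase | hcase
    · -- interpose the cell just left of j
      have hjc : ((σ j).1, (σ j).2 - 1) ∈ cells L := by
        have := h.1.mem_cells hj
        exact cells_left (by simpa [Prod.ext_iff] using this) (Nat.sub_le _ _)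
      obtain ⟨k, hk, hσk⟩ := h.1.surj hjc
      have hj1 : 1 ≤ (σ j).2 := le_trans (Nat.le_add_left 1 _) hcase.le
      have hkrow : (σ k).1 = (σ j).1 := by rw [hσk]
      have hkcol : (σ k).2 = (σ j).2 - 1 := by rw [hσk]
      have hkj : k < j := by
        refine h.2 k j hk hj (by rw [hkrow]) ?_
        rw [hkcol]; omega
      have hik : i < k := by
        refine IH (σ k).2 (by omega) i hi k hk rfl (by rw [hkrow, hrow]) (by omega)
      omega
    · have hcase' : (σ j).2 = (σ i).2 + 1 := by omega
      exact h.2 i j hi hj hrow hcase'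

lemma IsRST.row_lt (h : IsRST L n σ) {i j : ℕ} (hi : i ∈ Set.Icc 1 n) (hj : j ∈ Set.Icc 1 n)
    (hrow : (σ j).1 = (σ i).1) (hlt : (σ i).2 < (σ j).2) : i < j :=
  h.row_mono (σ j).2 i hi j hj rfl hrow hlt

end Basic

/-! ### Divisor structure -/

section Divisor

variable {L : List ℕ} {n d : ℕ} {σ : ℕ → ℕ × ℕ}

lemma TabDivisor.one (n : ℕ) (σ : ℕ → ℕ × ℕ) : TabDivisor n 1 σ :=
  ⟨one_dvd n, fun i _ _ hi => absurd (one_dvd i) hi⟩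

/-- the step lemma -/
lemma TabDivisor.step (hd : TabDivisor n d σ) {i : ℕ} (hi : i ∈ Set.Icc 1 n)
    (hdi : ¬ d ∣ i) : i < n ∧ σ (i + 1) = ((σ i).1, (σ i).2 + 1) := by
  simp only [Set.mem_Icc] at hi
  have hin : i < n := lt_of_le_of_ne hi.2 (fun h => hdi (h ▸ hd.1))
  exact ⟨hin, hd.2 i hi.1 hin hdi⟩

private lemma succ_mod_congr {a b d : ℕ} (h : a % d = b % d) : (a+1) % d = (b+1) % d := by
  rw [Nat.add_mod a 1 d, Nat.add_mod b 1 d, h]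

private lemma pred_mul_mod {d k : ℕ} (hd : 2 ≤ d) (hk : 1 ≤ k) :
    (d * k - 1) % d = d - 1 := by
  have h2 : d * (k-1) + d = d * k := by
    have := Nat.mul_sub d k 1
    have hdk : d * 1 ≤ d * k := Nat.mul_le_mul_left d hk
    omega
  rw [show d * k - 1 = d * (k-1) + (d-1) by omega, Nat.mul_add_mod]
  exact Nat.mod_eq_of_lt (by omega)

/-- the column of the box labeled `i` is `≡ i - 1 mod d` -/
lemma TabDivisor.mod_col (ht : IsTab L n σ) (hd : TabDivisor n d σ) (hd0 : 0 < d) :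
    ∀ c, ∀ i ∈ Set.Icc 1 n, (σ i).2 = c → (i - 1) % d = c % d := by
  intro c
  induction c using Nat.strong_induction_on with
  | _ c IH =>
    intro i hi hc
    rcases Nat.lt_or_ge d 2 with hd1 | hd2
    · have : d = 1 := by omega
      simp [this, Nat.mod_one]
    by_cases hdi : d ∣ (i - 1)
    · -- show d ∣ c
      obtain ⟨u, hu⟩ := hdi
      rcases Nat.eq_zero_or_pos c with hc0 | hc1
      · simp [hu, hc0, Nat.mul_mod_right]
      · have hcell : ((σ i).1, c - 1) ∈ cells L :=
          cells_left (by simpa [hc, Prod.ext_iff] using ht.mem_cells hi) (by omega)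
        obtain ⟨j, hj, hσj⟩ := ht.surj hcell
        have hj' := hj; simp only [Set.mem_Icc] at hj'
        by_cases hdj : d ∣ j
        · have hIH := IH (c-1) (by omega) j hj (by rw [hσj])
          obtain ⟨k, hk⟩ := hdj
          have hk1 : 1 ≤ k := by
            rcases Nat.eq_zero_or_pos k with h | h
            · exfalso; rw [h, Nat.mul_zero] at hk; omega
            · exact h
          have hj1 : (j - 1) % d = d - 1 := by rw [hk]; exact pred_mul_mod hd2 hk1
          have hcd : (c - 1) % d = d - 1 := by omega
          have hcmod : c % d = 0 := by
            rw [show c = (c-1) + 1 by omega, Nat.add_mod, hcd,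
              Nat.mod_eq_of_lt (show (1:ℕ) < d by omega),
              show d - 1 + 1 = d by omega, Nat.mod_self]
          rw [hcmod, hu, Nat.mul_mod_right]
        · obtain ⟨hjn, hstep⟩ := hd.step hj hdj
          have hσi : σ i = ((σ i).1, c) := by rw [← hc]
          have heq : σ (j+1) = σ i := by
            rw [hstep, hσj, hσi]; simp [Prod.ext_iff]; omega
          have hji : j + 1 = i := ht.1 (by simp; omega) hi heq
          have hdvd : d ∣ j := by rw [show j = i - 1 by omega]; exact ⟨u, hu⟩
          exact absurd hdvd hdj
    · -- i ≥ 2 and step from i - 1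
      have hi2 : 2 ≤ i := by
        have h1 : i - 1 ≠ 0 := fun h => hdi (h ▸ dvd_zero d)
        have := hi; simp only [Set.mem_Icc] at this; omega
      obtain ⟨hjn, hstep⟩ := hd.step (i := i - 1)
        (by simp only [Set.mem_Icc] at hi ⊢; omega) hdi
      rw [show i - 1 + 1 = i by omega] at hstep
      have hcol : (σ (i-1)).2 = c - 1 := by rw [hstep] at hc; simp at hc; omega
      have hc1 : 1 ≤ c := by rw [hstep] at hc; simp at hc; omega
      have hIH := IH (c-1) (by omega) (i-1)
        (by simp only [Set.mem_Icc] at hi ⊢; omega) hcol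
      have := succ_mod_congr (d := d) (a := i - 1 - 1) (b := c - 1) hIH
      rw [show i - 1 - 1 + 1 = i - 1 by omega, show c - 1 + 1 = c by omega] at this
      exact this

lemma TabDivisor.col_mod (ht : IsTab L n σ) (hd : TabDivisor n d σ) (hd0 : 0 < d)
    {i : ℕ} (hi : i ∈ Set.Icc 1 n) : (σ i).2 % d = (i - 1) % d :=
  (hd.mod_col ht hd0 (σ i).2 i hi rfl).symm

/-- consecutive run lemma -/
lemma TabDivisor.run (hd : TabDivisor n d σ) :
    ∀ k i, i ∈ Set.Icc 1 n → i + k ≤ n → (∀ t, t < k → ¬ d ∣ (i + t)) →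
      σ (i + k) = ((σ i).1, (σ i).2 + k) := by
  intro k
  induction k with
  | zero => intro i _ _ _; simp
  | succ k IH =>
    intro i hi hik hnd
    simp only [Set.mem_Icc] at hi
    have h1 := IH i (by simp; omega) (by omega) (fun t ht => hnd t (by omega))
    have hstep := hd.2 (i + k) (by omega) (by omega) (hnd k (by omega))
    rw [show i + (k+1) = (i + k) + 1 by omega, hstep, h1]
    show ((σ i).1, (σ i).2 + k + 1) = ((σ i).1, (σ i).2 + (k + 1))
    rw [Nat.add_assoc]

end Divisor

/-! ### Block coordinates and the quotient tableau -/

section Quot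

variable {L : List ℕ} {n d : ℕ} {σ : ℕ → ℕ × ℕ}

lemma getD_map_div (L : List ℕ) (d p : ℕ) : (L.map (· / d)).getD p 0 = L.getD p 0 / d := by
  rcases Nat.lt_or_ge p L.length with h | h
  · rw [List.getD_eq_getElem _ _ (by simpa using h), List.getD_eq_getElem _ _ h]
    simp
  · rw [List.getD_eq_default _ _ (by simpa using h), List.getD_eq_default _ _ h]
    simp

lemma mem_cells_map {L : List ℕ} {d p C : ℕ} :
    ((p, C) ∈ cells (L.map (· / d))) ↔ p < L.length ∧ C < L.getD p 0 / d := by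
  unfold cells
  simp only [Set.mem_setOf_eq, List.length_map, getD_map_div]

lemma dmul_mem (hdn : d ∣ n) {a s : ℕ} (ha : a ∈ Set.Icc 1 (n/d)) (hs1 : 1 ≤ s)
    (hsd : s ≤ d) : d*(a-1)+s ∈ Set.Icc 1 n := by
  obtain ⟨m, rfl⟩ := hdn
  rcases Nat.eq_zero_or_pos d with rfl | hd0
  · simp at ha
  simp only [Set.mem_Icc, Nat.mul_div_cancel_left _ hd0] at ha ⊢
  constructor
  · omega
  · have h1 : d*(a-1) + s ≤ d*(a-1) + d := by omega
    have h2 : d*(a-1) + d = d*a := by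
      have := Nat.mul_sub d a 1
      have : d * 1 ≤ d * a := Nat.mul_le_mul_left d ha.1
      omega
    have h3 : d*a ≤ d*m := Nat.mul_le_mul_left d ha.2
    omega

/-- The master coordinate formula: box `d(a-1)+s` of `σ` sits in the block of the
box `a` of the quotient, at offset `s-1`. -/
lemma TabDivisor.master (hσ : IsRST L n σ) (hd : TabDivisor n d σ) (hd0 : 0 < d)
    {a s : ℕ} (ha : a ∈ Set.Icc 1 (n/d)) (hs1 : 1 ≤ s) (hsd : s ≤ d) :
    σ (d*(a-1)+s) = ((quotTab d σ a).1, d * (quotTab d σ a).2 + (s - 1)) := by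
  have ha' := ha; simp only [Set.mem_Icc] at ha'
  have hmul : d*(a-1) + d = d*a := by
    have := Nat.mul_sub d a 1
    have : d * 1 ≤ d * a := Nat.mul_le_mul_left d ha'.1
    omega
  have hi0 : d*(a-1)+1 ∈ Set.Icc 1 n := dmul_mem hd.1 ha le_rfl hd0
  have hrun : ∀ s', s' ≤ d - 1 → σ (d*(a-1)+1 + s') = ((σ (d*(a-1)+1)).1, (σ (d*(a-1)+1)).2 + s') := by
    intro s' hs'
    refine hd.run s' _ hi0 ?_ ?_
    · have := dmul_mem hd.1 ha (s := d) hd0 le_rfl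
      simp only [Set.mem_Icc] at this; omega
    · intro t ht h
      rw [show d*(a-1)+1+t = d*(a-1)+(1+t) by omega] at h
      have : d ∣ 1 + t := (Nat.dvd_add_right (Dvd.intro _ rfl)).mp h
      have := Nat.le_of_dvd (by omega) this
      omega
  have hcol0 : (σ (d*(a-1)+1)).2 % d = 0 := by
    rw [hd.col_mod hσ.1 hd0 hi0]
    simp [Nat.mul_mod_right]
  obtain ⟨C0, hC0⟩ : d ∣ (σ (d*(a-1)+1)).2 := Nat.dvd_of_mod_eq_zero hcol0
  have hda : σ (d*a) = ((σ (d*(a-1)+1)).1, d * C0 + (d-1)) := by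
    rw [← hmul, show d*(a-1)+d = d*(a-1)+1 + (d-1) by omega, hrun (d-1) le_rfl, hC0]
  have hqa : quotTab d σ a = ((σ (d*(a-1)+1)).1, C0) := by
    rw [quotTab, hda]
    simp only [Prod.mk.injEq, true_and]
    rw [show d * C0 + (d-1) + 1 = d * (C0 + 1) by
      have : d * (C0+1) = d * C0 + d := by ring
      omega]
    rw [Nat.mul_div_cancel_left _ hd0]
    omega
  rw [show d*(a-1)+s = d*(a-1)+1 + (s-1) by omega, hrun (s-1) (by omega), hqa, hC0]

lemma TabDivisor.last_box (hσ : IsRST L n σ) (hd : TabDivisor n d σ) (hd0 : 0 < d)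
    {a : ℕ} (ha : a ∈ Set.Icc 1 (n/d)) :
    σ (d*a) = ((quotTab d σ a).1, d * (quotTab d σ a).2 + (d-1)) := by
  have h := hd.master hσ hd0 ha (show 1 ≤ d from hd0) le_rfl
  rw [show d*(a-1)+d = d*a by
    have h1 := Nat.mul_sub d a 1
    have h2 : d * 1 ≤ d * a := Nat.mul_le_mul_left d (by simp at ha; omega)
    omega] at h
  exact h

lemma TabDivisor.first_box (hσ : IsRST L n σ) (hd : TabDivisor n d σ) (hd0 : 0 < d)
    {a : ℕ} (ha : a ∈ Set.Icc 1 (n/d)) :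
    σ (d*(a-1)+1) = ((quotTab d σ a).1, d * (quotTab d σ a).2) := by
  have h := hd.master hσ hd0 ha le_rfl (show 1 ≤ d from hd0)
  simpa using h

/-- decomposition of a label into block and offset -/
lemma idx_decomp (hdn : d ∣ n) (hd0 : 0 < d) {i : ℕ} (hi : i ∈ Set.Icc 1 n) :
    ((i-1)/d + 1) ∈ Set.Icc 1 (n/d) ∧ ((i-1) % d + 1) ∈ Set.Icc 1 d ∧
      i = d * (((i-1)/d + 1) - 1) + ((i-1) % d + 1) := by
  obtain ⟨m, rfl⟩ := hdn
  simp only [Set.mem_Icc, Nat.mul_div_cancel_left _ hd0] at hi ⊢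
  have hmod := Nat.mod_lt (i-1) hd0
  have hdiv := Nat.div_add_mod (i-1) d
  have hle : (i-1)/d + 1 ≤ m := by
    by_contra hcon
    push_neg at hcon
    have h1 : m ≤ (i-1)/d := by omega
    have h2 := Nat.mul_le_mul_left d h1
    omega
  simp only [Nat.add_sub_cancel]
  exact ⟨⟨Nat.le_add_left 1 _, hle⟩, ⟨Nat.le_add_left 1 _, by omega⟩, by omega⟩

end Quot

section Quot2

variable {L : List ℕ} {n d : ℕ} {σ : ℕ → ℕ × ℕ}

/-- a tableau divisor divides every part of the shape -/
lemma TabDivisor.part_dvd (hσ : IsRST L n σ) (hd : TabDivisor n d σ) (hd0 : 0 < d)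
    (hpos : ∀ x ∈ L, 0 < x) {p : ℕ} (hp : p < L.length) : d ∣ L.getD p 0 := by
  rcases Nat.lt_or_ge d 2 with hd1 | hd2
  · have : d = 1 := by omega
    simp [this]
  have hppos : 0 < L.getD p 0 := by
    refine hpos _ ?_
    rw [List.getD_eq_getElem _ _ hp]
    exact List.getElem_mem _
  have hcell : (p, L.getD p 0 - 1) ∈ cells L :=
    ⟨hp, show L.getD p 0 - 1 < L.getD p 0 by omega⟩
  obtain ⟨j, hj, hσj⟩ := hσ.1.surj hcell
  have hdj : d ∣ j := by
    by_contra hdj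
    obtain ⟨hjn, hstep⟩ := hd.step hj hdj
    have : σ (j+1) ∈ cells L := hσ.1.mem_cells (by simp; omega)
    rw [hstep, hσj] at this
    have h2 : L.getD p 0 - 1 + 1 < L.getD p 0 := this.2
    omega
  have hmod := hd.col_mod hσ.1 hd0 hj
  rw [hσj] at hmod
  obtain ⟨k, hk⟩ := hdj
  have hj' := hj; simp only [Set.mem_Icc] at hj'
  have hk1 : 1 ≤ k := by
    rcases Nat.eq_zero_or_pos k with h | h
    · exfalso; rw [h, Nat.mul_zero] at hk; omega
    · exact h
  have hjm : (j - 1) % d = d - 1 := by rw [hk]; exact pred_mul_mod hd2 hk1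
  have hmod' : (L.getD p 0 - 1) % d = (j - 1) % d := hmod
  have hcm : (L.getD p 0 - 1) % d = d - 1 := by rw [hmod', hjm]
  -- conclude d ∣ L.getD p 0
  have hdm := Nat.div_add_mod (L.getD p 0 - 1) d
  refine ⟨(L.getD p 0 - 1)/d + 1, ?_⟩
  have : d * ((L.getD p 0 - 1)/d + 1) = d * ((L.getD p 0 - 1)/d) + d := by ring
  omega

/-- the quotient tableau is a row-strict tableau of the quotient shape -/
lemma TabDivisor.quot_isRST (hσ : IsRST L n σ) (hd : TabDivisor n d σ) (hd0 : 0 < d)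
    (hpos : ∀ x ∈ L, 0 < x) : IsRST (L.map (· / d)) (n/d) (quotTab d σ) := by
  have hlast := fun {a} (ha : a ∈ Set.Icc 1 (n/d)) => hd.last_box hσ hd0 ha
  have hmem : ∀ a ∈ Set.Icc 1 (n/d), d*a ∈ Set.Icc 1 n := by
    intro a ha
    have := dmul_mem hd.1 ha (s := d) hd0 le_rfl
    rwa [show d*(a-1)+d = d*a by
      have h1 := Nat.mul_sub d a 1
      have h2 : d * 1 ≤ d * a := Nat.mul_le_mul_left d (by simp at ha; omega)
      omega] at this
  refine ⟨⟨?_, ?_, ?_⟩, ?_⟩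
  · -- InjOn
    intro a ha b hb hab
    have h1 := hlast ha
    have h2 := hlast hb
    have : σ (d*a) = σ (d*b) := by rw [h1, h2, hab]
    have := hσ.1.1 (hmem a ha) (hmem b hb) this
    exact Nat.eq_of_mul_eq_mul_left hd0 this
  · -- image
    ext c
    obtain ⟨p, C⟩ := c
    simp only [Set.mem_image]
    rw [mem_cells_map]
    constructor
    · rintro ⟨a, ha, hqa⟩
      have h1 := hlast ha
      rw [hqa] at h1
      have hcells := hσ.1.mem_cells (hmem a ha)
      rw [h1] at hcells
      have hrow : p < L.length := hcells.1
      have hcol : d * C + (d-1) < L.getD p 0 := hcells.2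
      refine ⟨hrow, ?_⟩
      have h5 : d * (C + 1) ≤ L.getD p 0 := by
        have h6 : d * (C+1) = d * C + d := by ring
        omega
      have h7 : C + 1 ≤ L.getD p 0 / d :=
        (Nat.le_div_iff_mul_le hd0).mpr (by rw [Nat.mul_comm]; exact h5)
      omega
    · rintro ⟨hp, hC⟩
      have hcell : (p, d * C + (d-1)) ∈ cells L := by
        refine ⟨hp, ?_⟩
        have h1 : C + 1 ≤ L.getD p 0 / d := hC
        have h2 : d * (C+1) ≤ d * (L.getD p 0 / d) := Nat.mul_le_mul_left d h1
        have h3 : d * (L.getD p 0 / d) ≤ L.getD p 0 := Nat.mul_div_le _ _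
        have : d * (C+1) = d * C + d := by ring
        simp only
        omega
      obtain ⟨i, hi, hσi⟩ := hσ.1.surj hcell
      have hmod := hd.col_mod hσ.1 hd0 hi
      rw [hσi] at hmod
      simp only at hmod
      have hdvd : d ∣ i := by
        rcases Nat.lt_or_ge d 2 with hd1 | hd2
        · have : d = 1 := by omega
          simp [this]
        have hmd : (d * C + (d-1)) % d = d - 1 := by
          rw [Nat.mul_add_mod]
          exact Nat.mod_eq_of_lt (by omega)
        rw [hmd] at hmod
        have hi' := hi; simp only [Set.mem_Icc] at hi'
        have hdm := Nat.div_add_mod (i-1) d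
        refine ⟨(i-1)/d + 1, ?_⟩
        have : d * ((i-1)/d + 1) = d * ((i-1)/d) + d := by ring
        omega
      obtain ⟨a, rfl⟩ := hdvd
      have hi' := hi; simp only [Set.mem_Icc] at hi'
      have ha : a ∈ Set.Icc 1 (n/d) := by
        simp only [Set.mem_Icc]
        constructor
        · rcases Nat.eq_zero_or_pos a with h | h
          · exfalso; rw [h, Nat.mul_zero] at hi'; omega
          · exact h
        · exact (Nat.le_div_iff_mul_le hd0).mpr (by rw [Nat.mul_comm]; exact hi'.2)
      refine ⟨a, ha, ?_⟩
      have h1 := hlast ha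
      rw [hσi] at h1
      have hrow : (quotTab d σ a).1 = p := by
        have := congrArg Prod.fst h1; simpa using this.symm
      have hcol : d * (quotTab d σ a).2 + (d-1) = d * C + (d-1) := by
        have := congrArg Prod.snd h1; simpa using this.symm
      have : (quotTab d σ a).2 = C := by
        have := Nat.eq_of_mul_eq_mul_left hd0 (show d * (quotTab d σ a).2 = d * C by omega)
        exact this
      ext <;> simp [hrow, this]
  · -- normalization
    intro m hm
    have hdm : d * m ∉ Set.Icc 1 n := by
      simp only [Set.mem_Icc, not_and_or, not_le] at hm ⊢
      rcases hm with h | h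
      · left
        have : m = 0 := by omega
        simp [this]
      · right
        obtain ⟨k, hk⟩ := hd.1
        rw [hk]
        have : k + 1 ≤ m := by rw [hk, Nat.mul_div_cancel_left _ hd0] at h; omega
        calc d * k < d * k + d := by omega
        _ = d * (k+1) := by ring
        _ ≤ d * m := Nat.mul_le_mul_left d this
    rw [quotTab]
    rw [hσ.1.2.2 _ hdm]
    simp only
    rcases Nat.lt_or_ge d 2 with hd1 | hd2
    · have : d = 1 := by omega
      simp [this]
    · rw [Nat.div_eq_of_lt (by omega)]
  · -- RowStrict
    intro a b ha hb hrow hcol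
    have h1 := hlast ha
    have h2 := hlast hb
    have hlt : d*a < d*b := by
      refine hσ.row_lt (hmem a ha) (hmem b hb) ?_ ?_
      · rw [h1, h2]; exact hrow
      · rw [h1, h2]
        show d * (quotTab d σ a).2 + (d-1) < d * (quotTab d σ b).2 + (d-1)
        rw [hcol]
        have h3 : d * ((quotTab d σ a).2 + 1) = d * (quotTab d σ a).2 + d := by ring
        omega
    exact Nat.lt_of_mul_lt_mul_left hlt

end Quot2

section Transfer

variable {L : List ℕ} {n d : ℕ} {σ : ℕ → ℕ × ℕ}

/-- a divisor of the quotient lifts to a divisor of `σ` -/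
lemma TabDivisor.up (hσ : IsRST L n σ) (hd : TabDivisor n d σ) (hd0 : 0 < d) {e : ℕ}
    (he : TabDivisor (n/d) e (quotTab d σ)) : TabDivisor n (e*d) σ := by
  obtain ⟨m, hm⟩ := hd.1
  have hnd : n / d = m := by rw [hm, Nat.mul_div_cancel_left _ hd0]
  constructor
  · obtain ⟨k, hk⟩ := he.1
    rw [hnd] at hk
    exact ⟨k, by rw [hm, hk]; ring⟩
  intro i hi1 hin hie
  by_cases hdi : d ∣ i
  · obtain ⟨a, rfl⟩ := hdi
    have hea : ¬ e ∣ a := fun ⟨k, hk⟩ => hie ⟨k, by rw [hk]; ring⟩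
    have ha1 : 1 ≤ a := by
      rcases Nat.eq_zero_or_pos a with h | h
      · exfalso; rw [h, Nat.mul_zero] at hi1; omega
      · exact h
    have han : a < m := by
      by_contra hcon
      push_neg at hcon
      have := Nat.mul_le_mul_left d hcon
      omega
    have hstep := he.2 a (by omega) (by omega) hea
    have ha : a ∈ Set.Icc 1 (n/d) := by simp [hnd]; omega
    have ha' : a + 1 ∈ Set.Icc 1 (n/d) := by simp [hnd]; omega
    have hfirst := hd.first_box hσ hd0 ha'
    rw [show d*(a+1-1)+1 = d*a+1 by rw [Nat.add_sub_cancel]] at hfirst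
    have hlast := hd.last_box hσ hd0 ha
    rw [hfirst, hlast, hstep]
    show ((quotTab d σ a).1, d * ((quotTab d σ a).2 + 1)) =
      ((quotTab d σ a).1, d * (quotTab d σ a).2 + (d-1) + 1)
    have h3 : d * ((quotTab d σ a).2 + 1) = d * (quotTab d σ a).2 + d := by ring
    simp only [Prod.mk.injEq, true_and]
    omega
  · exact hd.2 i hi1 hin hdi

/-- a multiple-of-`d` divisor of `σ` descends to the quotient -/
lemma TabDivisor.down (hσ : IsRST L n σ) (hd : TabDivisor n d σ) (hd0 : 0 < d) {l : ℕ}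
    (hl : TabDivisor n l σ) (hdl : d ∣ l) : TabDivisor (n/d) (l/d) (quotTab d σ) := by
  obtain ⟨l', rfl⟩ := hdl
  obtain ⟨m, hm⟩ := hd.1
  have hnd : n / d = m := by rw [hm, Nat.mul_div_cancel_left _ hd0]
  have hld : d * l' / d = l' := Nat.mul_div_cancel_left _ hd0
  constructor
  · obtain ⟨k, hk⟩ := hl.1
    rw [hld, hnd]
    exact ⟨k, by
      have : d * m = d * (l' * k) := by rw [← hm, hk]; ring
      exact Nat.eq_of_mul_eq_mul_left hd0 this⟩
  intro a ha1 ham hea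
  rw [hld] at hea
  rw [hnd] at ham
  have hia : ¬ (d * l') ∣ (d * a) := by
    rintro ⟨k, hk⟩
    exact hea ⟨k, Nat.eq_of_mul_eq_mul_left hd0 (by rw [hk]; ring)⟩
  have hstep := hl.2 (d*a) (show 1 ≤ d*a from Nat.mul_pos hd0 ha1) (by
    rw [hm]
    have h1 := Nat.mul_le_mul_left d (show a+1 ≤ m by omega)
    have h2 : d*(a+1) = d*a + d := by ring
    omega) hia
  have ha : a ∈ Set.Icc 1 (n/d) := by simp [hnd]; omega
  have ha' : a + 1 ∈ Set.Icc 1 (n/d) := by simp [hnd]; omega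
  have hfirst := hd.first_box hσ hd0 ha'
  rw [show d*(a+1-1)+1 = d*a+1 by rw [Nat.add_sub_cancel]] at hfirst
  have hlast := hd.last_box hσ hd0 ha
  rw [hlast] at hstep
  rw [hfirst] at hstep
  -- hstep : ((τ (a+1)).1, d * (τ (a+1)).2) = ((τ a).1, d*(τ a).2 + (d-1) + 1)
  have hrow : (quotTab d σ (a+1)).1 = (quotTab d σ a).1 := by
    have := congrArg Prod.fst hstep; simpa using this
  have hcol : d * (quotTab d σ (a+1)).2 = d * (quotTab d σ a).2 + (d-1) + 1 := by
    have := congrArg Prod.snd hstep; simpa using this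
  have hcol' : (quotTab d σ (a+1)).2 = (quotTab d σ a).2 + 1 := by
    refine Nat.eq_of_mul_eq_mul_left hd0 ?_
    have : d * ((quotTab d σ a).2 + 1) = d * (quotTab d σ a).2 + d := by ring
    omega
  ext
  · exact hrow
  · show (quotTab d σ (a+1)).2 = (quotTab d σ a).2 + 1
    exact hcol'

end Transfer

section Dmax

variable {L : List ℕ} {n : ℕ} {σ : ℕ → ℕ × ℕ}

/-- the maximal tableau divisor -/
noncomputable def dmax (n : ℕ) (σ : ℕ → ℕ × ℕ) : ℕ :=
  Nat.findGreatest (fun e => TabDivisor n e σ) n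

lemma dmax_spec (hn : 0 < n) : TabDivisor n (dmax n σ) σ ∧ 1 ≤ dmax n σ := by
  have h1 : TabDivisor n 1 σ := TabDivisor.one n σ
  have hs := Nat.findGreatest_spec (P := fun e => TabDivisor n e σ) (m := 1) hn h1
  have hle := Nat.le_findGreatest (P := fun e => TabDivisor n e σ) (m := 1) hn h1
  exact ⟨hs, hle⟩

lemma dmax_le {e : ℕ} (hn : 0 < n) (he : TabDivisor n e σ) (he0 : 0 < e) :
    e ≤ dmax n σ :=
  Nat.le_findGreatest (Nat.le_of_dvd hn he.1) he

lemma foldr_gcd_dvd {L : List ℕ} {x : ℕ} (hx : x ∈ L) : L.foldr Nat.gcd 0 ∣ x := by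
  induction L with
  | nil => simp at hx
  | cons y t IH =>
    simp only [List.foldr_cons]
    rcases List.mem_cons.mp hx with h | h
    · rw [h]; exact Nat.gcd_dvd_left _ _
    · exact (Nat.gcd_dvd_right _ _).trans (IH h)

lemma dvd_foldr_gcd {L : List ℕ} {e : ℕ} (h : ∀ x ∈ L, e ∣ x) : e ∣ L.foldr Nat.gcd 0 := by
  induction L with
  | nil => simp
  | cons y t IH =>
    simp only [List.foldr_cons]
    exact Nat.dvd_gcd (h y (by simp)) (IH (fun x hx => h x (List.mem_cons_of_mem y hx)))

lemma foldr_gcd_dvd_sum (L : List ℕ) : L.foldr Nat.gcd 0 ∣ L.sum := by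
  induction L with
  | nil => simp
  | cons y t IH =>
    simp only [List.foldr_cons, List.sum_cons]
    exact Nat.dvd_add (Nat.gcd_dvd_left _ _) ((Nat.gcd_dvd_right _ _).trans IH)

/-- the maximal divisor of a row-strict tableau divides the gcd of the parts -/
lemma dmax_dvd_gcd (hL : IsPartition L n) (hn : 0 < n) (hσ : IsRST L n σ) :
    dmax n σ ∣ L.foldr Nat.gcd 0 := by
  obtain ⟨hd, hd1⟩ := dmax_spec (σ := σ) hn
  refine dvd_foldr_gcd (fun x hx => ?_)
  obtain ⟨p, hp, hpx⟩ := List.getElem_of_mem hx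
  have : L.getD p 0 = x := by rw [List.getD_eq_getElem _ _ hp, hpx]
  rw [← this]
  exact hd.part_dvd hσ hd1 hL.2.2 hp

lemma gcd_dvd_n (hL : IsPartition L n) : L.foldr Nat.gcd 0 ∣ n := by
  rw [← hL.1]; exact foldr_gcd_dvd_sum L

lemma gcd_ne_zero (hL : IsPartition L n) (hn : 0 < n) : L.foldr Nat.gcd 0 ≠ 0 := by
  intro h
  have := gcd_dvd_n hL
  rw [h] at this
  have := Nat.eq_zero_of_zero_dvd this
  omega

/-- quotient shape is a partition of `n / d` -/
lemma quot_isPartition (hL : IsPartition L n) {d : ℕ} (hd0 : 0 < d)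
    (hdvd : ∀ p < L.length, d ∣ L.getD p 0) : IsPartition (L.map (· / d)) (n / d) := by
  refine ⟨?_, ?_, ?_⟩
  · -- sum
    have : ∀ (M : List ℕ), (∀ p < M.length, d ∣ M.getD p 0) → (M.map (· / d)).sum = M.sum / d := by
      intro M
      induction M with
      | nil => simp
      | cons y t IH =>
        intro h
        have hy : d ∣ y := h 0 (by simp)
        have ht : ∀ p < t.length, d ∣ t.getD p 0 := by
          intro p hp
          have := h (p+1) (by simp; omega)
          simpa using this
        simp only [List.map_cons, List.sum_cons, IH ht]
        obtain ⟨k, rfl⟩ := hy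
        obtain ⟨s, hs⟩ : d ∣ t.sum := by
          have : ∀ x ∈ t, d ∣ x := by
            intro x hx
            obtain ⟨p, hp, hpx⟩ := List.getElem_of_mem hx
            have := ht p hp
            rwa [List.getD_eq_getElem _ _ hp, hpx] at this
          exact (dvd_foldr_gcd this).trans (foldr_gcd_dvd_sum t)
        rw [hs, Nat.mul_div_cancel_left _ hd0, ← Nat.mul_add, Nat.mul_div_cancel_left _ hd0]
        rw [Nat.mul_div_cancel_left _ hd0]
    rw [this L hdvd, hL.1]
  · -- sorted
    exact List.Pairwise.map _ (fun a b h => Nat.div_le_div_right h) hL.2.1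
  · -- positive
    intro x hx
    obtain ⟨y, hy, rfl⟩ := List.mem_map.mp hx
    obtain ⟨p, hp, hpy⟩ := List.getElem_of_mem hy
    have hdy : d ∣ y := by
      have := hdvd p hp
      rwa [List.getD_eq_getElem _ _ hp, hpy] at this
    have hy0 : 0 < y := hL.2.2 y hy
    exact Nat.div_pos (Nat.le_of_dvd hy0 hdy) hd0

/-- `dimB` of the quotient shape -/
lemma dimB_quot (L : List ℕ) {d : ℕ} (hd0 : 0 < d)
    (hdvd : ∀ p < L.length, d ∣ L.getD p 0) : dimB L = d * dimB (L.map (· / d)) := by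
  rw [dimB, dimB, List.length_map, Finset.mul_sum]
  refine Finset.sum_congr rfl (fun p hp => ?_)
  rw [getD_map_div]
  obtain ⟨k, hk⟩ := hdvd p (Finset.mem_range.mp hp)
  rw [hk, Nat.mul_div_cancel_left _ hd0]
  ring

end Dmax

section Counting

variable {M : List ℕ} {m : ℕ} {σ : ℕ → ℕ × ℕ}

lemma part_le_sum {M : List ℕ} {p : ℕ} (hp : p < M.length) : M.getD p 0 ≤ M.sum := by
  rw [List.getD_eq_getElem _ _ hp]
  exact List.single_le_sum (fun x _ => Nat.zero_le x) _ (List.getElem_mem _)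

/-- the predicate used to locate the partner of `i` in row `p'` -/
private def Ppred (m : ℕ) (σ : ℕ → ℕ × ℕ) (M : List ℕ) (p' : ℕ) (i : ℕ) (c : ℕ) : Prop :=
  c < M.getD p' 0 ∧ lab m σ (p', c) < i

/-- the triple set recording Springer pairs -/
private noncomputable def Tfin (M : List ℕ) (m : ℕ) (σ : ℕ → ℕ × ℕ) : Finset ((ℕ × ℕ) × ℕ) :=
  ((Finset.range M.length ×ˢ Finset.range (m+1)) ×ˢ Finset.range M.length).filter
    (fun x => x.1.2 < M.getD x.1.1 0 ∧ x.2 ≠ x.1.1 ∧ x.1.2 < M.getD x.2 0 ∧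
      lab m σ (x.2, x.1.2) < lab m σ (x.1.1, x.1.2))

private noncomputable def phi (M : List ℕ) (m : ℕ) (σ : ℕ → ℕ × ℕ) :
    ((ℕ × ℕ) × ℕ) → ℕ × ℕ :=
  fun x => (lab m σ (x.1.1, x.1.2),
    lab m σ (x.2, Nat.findGreatest (Ppred m σ M x.2 (lab m σ (x.1.1, x.1.2))) m))

lemma pairs_eq_Tfin (hσ : IsRST M m σ) (hsum : M.sum = m) :
    pairsCount m σ = (Tfin M m σ).card := by
  classical
  have hpart : ∀ p, p < M.length → M.getD p 0 ≤ m := fun p hp => hsum ▸ part_le_sum hp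
  -- image
  have himg : phi M m σ '' ↑(Tfin M m σ) = {p : ℕ × ℕ | SpringerPair m σ p.1 p.2} := by
    ext ⟨i0, j0⟩
    simp only [Tfin, Set.mem_image, Set.mem_setOf_eq, Finset.coe_filter, Set.mem_setOf_eq,
      Finset.mem_product, Finset.mem_range]
    constructor
    · rintro ⟨⟨⟨p, q⟩, p'⟩, ⟨⟨⟨hp, hq⟩, hp'⟩, hqp, hne, hqp', hlt⟩, hphi⟩
      simp only [phi] at hphi
      have hq2 : q < M.getD p 0 := hqp
      have hq2' : q < M.getD p' 0 := hqp'
      have hlt2 : lab m σ (p', q) < lab m σ (p, q) := hlt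
      set i := lab m σ (p, q) with hi
      have hispec := lab_spec hσ.1 (show (p,q) ∈ cells M from ⟨hp, hqp⟩)
      set k := Nat.findGreatest (Ppred m σ M p' i) m with hk
      have hPq : Ppred m σ M p' i q := ⟨hq2', hlt2⟩
      have hqm : q ≤ m := le_of_lt (lt_of_lt_of_le hq2' (hpart p' hp'))
      have hPk : Ppred m σ M p' i k := Nat.findGreatest_spec hqm hPq
      have hqk : q ≤ k := Nat.le_findGreatest hqm hPq
      have hjspec := lab_spec hσ.1 (show (p',k) ∈ cells M from ⟨hp', hPk.1⟩)
      obtain ⟨rfl, rfl⟩ : i0 = i ∧ j0 = lab m σ (p', k) := by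
        constructor
        · exact (congrArg Prod.fst hphi).symm
        · exact (congrArg Prod.snd hphi).symm
      refine ⟨hjspec.1.1, hPk.2, hispec.1.2, ?_, ?_⟩
      · rw [hispec.2, hjspec.2]; exact hqk
      · intro r hr hσr
        rw [hjspec.2] at hσr
        have hrc : σ r ∈ cells M := hσ.1.mem_cells hr
        rw [hσr] at hrc
        have hk1 : k + 1 < M.getD p' 0 := hrc.2
        have hnP : ¬ Ppred m σ M p' i (k+1) :=
          Nat.findGreatest_is_greatest (show k < k + 1 by omega)
            (show k + 1 ≤ m by have := hpart p' hp'; omega)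
        have hlab : lab m σ (p', k+1) = r := by
          have := lab_apply hσ.1 hr
          rw [hσr] at this; exact this
        have hir : i ≤ r := by
          by_contra hcon
          exact hnP ⟨hk1, by rw [hlab]; omega⟩
        have hir' : i ≠ r := by
          intro h
          rw [← h] at hσr
          rw [hispec.2] at hσr
          have : p = p' := (congrArg Prod.fst hσr)
          exact hne this.symm
        omega
    · rintro hsp
      obtain ⟨hj1, hji, him, hcol, hnext⟩ := hsp
      have hi : i0 ∈ Set.Icc 1 m := by simp; omega
      have hj : j0 ∈ Set.Icc 1 m := by simp; omega
      have hic := hσ.1.mem_cells hi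
      have hjc := hσ.1.mem_cells hj
      set p := (σ i0).1 with hpdef
      set q := (σ i0).2 with hqdef
      set p' := (σ j0).1 with hp'def
      set qj := (σ j0).2 with hqjdef
      have hσi : σ i0 = (p, q) := rfl
      have hσj : σ j0 = (p', qj) := rfl
      have hic1 : p < M.length := hic.1
      have hic2 : q < M.getD p 0 := hic.2
      have hjc1 : p' < M.length := hjc.1
      have hjc2 : qj < M.getD p' 0 := hjc.2
      have hne : p' ≠ p := by
        intro h
        rcases Nat.eq_or_lt_of_le hcol with hc | hc
        · have : σ i0 = σ j0 := by
            rw [hσi, hσj, h, hc]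
          have := hσ.1.1 hi hj this
          omega
        · have := hσ.row_lt hi hj h hc
          omega
      have hlabi : lab m σ (p, q) = i0 := by rw [← hσi]; exact lab_apply hσ.1 hi
      have hlabj : lab m σ (p', qj) = j0 := by rw [← hσj]; exact lab_apply hσ.1 hj
      have hlabq : lab m σ (p', q) < i0 := by
        rcases Nat.eq_or_lt_of_le hcol with hc | hc
        · rw [hc, hlabj]; exact hji
        · have hcell : (p', q) ∈ cells M := ⟨hjc1, lt_of_le_of_lt hcol hjc2⟩
          have hspec := lab_spec hσ.1 hcell
          have : lab m σ (p', q) < j0 := by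
            refine hσ.row_lt hspec.1 hj ?_ ?_
            · rw [hspec.2]
            · rw [hspec.2]; exact hc
          omega
      refine ⟨⟨(p, q), p'⟩, ⟨⟨⟨hic1, show q < m + 1 by
        have := hpart p hic1
        omega⟩, hjc1⟩, hic2, hne, lt_of_le_of_lt hcol hjc2,
        show lab m σ (p', q) < lab m σ (p, q) by rw [hlabi]; exact hlabq⟩, ?_⟩
      simp only [phi]
      rw [hlabi]
      set k := Nat.findGreatest (Ppred m σ M p' i0) m with hk
      have hqjm : qj ≤ m := le_of_lt (lt_of_lt_of_le hjc2 (hpart p' hjc1))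
      have hPqj : Ppred m σ M p' i0 qj := ⟨hjc2, by rw [hlabj]; exact hji⟩
      have hqjk : qj ≤ k := Nat.le_findGreatest hqjm hPqj
      have hPk : Ppred m σ M p' i0 k := Nat.findGreatest_spec hqjm hPqj
      have hkqj : k = qj := by
        by_contra hcon
        have hlt : qj < k := by omega
        have hcell : (p', qj + 1) ∈ cells M :=
          ⟨hjc1, show qj + 1 < M.getD p' 0 by have := hPk.1; omega⟩
        have hspec := lab_spec hσ.1 hcell
        have hir := hnext _ hspec.1 (by rw [hspec.2])
        have hrk : lab m σ (p', qj+1) ≤ lab m σ (p', k) := by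
          rcases Nat.eq_or_lt_of_le (show qj + 1 ≤ k by omega) with hc | hc
          · rw [hc]
          · have hkc : (p', k) ∈ cells M := ⟨hjc1, hPk.1⟩
            have hkspec := lab_spec hσ.1 hkc
            refine le_of_lt (hσ.row_lt hspec.1 hkspec.1 ?_ ?_)
            · rw [hspec.2, hkspec.2]
            · rw [hspec.2, hkspec.2]; exact hc
        have := hPk.2
        omega
      rw [hkqj, hlabj]
  -- injectivity
  have hinj : Set.InjOn (phi M m σ) ↑(Tfin M m σ) := by
    rintro ⟨⟨p1, q1⟩, p1'⟩ h1 ⟨⟨p2, q2⟩, p2'⟩ h2 heq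
    simp only [Tfin, Finset.coe_filter, Set.mem_setOf_eq, Finset.mem_product,
      Finset.mem_range] at h1 h2
    obtain ⟨⟨⟨hp1, _⟩, hp1'⟩, hq1, _, hq1', hl1⟩ := h1
    obtain ⟨⟨⟨hp2, _⟩, hp2'⟩, hq2, _, hq2', hl2⟩ := h2
    simp only [phi, Prod.mk.injEq] at heq
    obtain ⟨heqi, heqj⟩ := heq
    have hs1 := lab_spec hσ.1 (show ((p1,q1) : ℕ × ℕ) ∈ cells M from ⟨hp1, hq1⟩)
    have hs2 := lab_spec hσ.1 (show ((p2,q2) : ℕ × ℕ) ∈ cells M from ⟨hp2, hq2⟩)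
    have hcell : ((p1, q1) : ℕ × ℕ) = (p2, q2) := by
      rw [← hs1.2, ← hs2.2, heqi]
    -- now the rows of the partners
    set i := lab m σ (p1, q1) with hidef
    have hi2 : lab m σ (p2, q2) = i := by rw [← heqi]
    set k1 := Nat.findGreatest (Ppred m σ M p1' i) m with hk1
    set k2 := Nat.findGreatest (Ppred m σ M p2' (lab m σ (p2,q2))) m with hk2
    have hPk1 : Ppred m σ M p1' i k1 :=
      Nat.findGreatest_spec (le_of_lt (lt_of_lt_of_le hq1' (hpart p1' hp1'))) ⟨hq1', hl1⟩
    have hPk2 : Ppred m σ M p2' (lab m σ (p2,q2)) k2 :=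
      Nat.findGreatest_spec (le_of_lt (lt_of_lt_of_le hq2' (hpart p2' hp2'))) ⟨hq2', hl2⟩
    have hj1 := lab_spec hσ.1 (show ((p1',k1) : ℕ × ℕ) ∈ cells M from ⟨hp1', hPk1.1⟩)
    have hj2 := lab_spec hσ.1 (show ((p2',k2) : ℕ × ℕ) ∈ cells M from ⟨hp2', hPk2.1⟩)
    have hcell2 : ((p1', k1) : ℕ × ℕ) = (p2', k2) := by
      rw [← hj1.2, ← hj2.2, heqj]
    have : p1' = p2' := congrArg Prod.fst hcell2
    rw [Prod.mk.injEq]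
    exact ⟨hcell, this⟩
  have := Set.ncard_image_of_injOn hinj
  rw [himg] at this
  rw [pairsCount, this, Set.ncard_coe_finset]

end Counting

section Counting2

variable {M : List ℕ} {m : ℕ} {σ : ℕ → ℕ × ℕ}

lemma sorted_getD {M : List ℕ} (hs : M.Pairwise (· ≥ ·)) {p p' : ℕ} (hpp : p ≤ p')
    (hp' : p' < M.length) : M.getD p' 0 ≤ M.getD p 0 := by
  rcases eq_or_lt_of_le hpp with rfl | h
  · exact le_refl _
  · rw [List.getD_eq_getElem _ _ hp', List.getD_eq_getElem _ _ (lt_trans h hp')]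
    exact List.pairwise_iff_getElem.mp hs p p' (lt_trans h hp') hp' h

lemma Tfin_card (hσ : IsRST M m σ) (hsum : M.sum = m) (hsort : M.Pairwise (· ≥ ·)) :
    (Tfin M m σ).card = dimB M := by
  classical
  have hpart : ∀ p, p < M.length → M.getD p 0 ≤ m := fun p hp => hsum ▸ part_le_sum hp
  set len := M.length with hlen
  set part := fun p => M.getD p 0 with hpartdef
  set Doff := (Finset.range len ×ˢ Finset.range len).filter (fun pp => pp.1 ≠ pp.2) with hDoff
  set g := fun pp : ℕ × ℕ => (Finset.range (min (part pp.1) (part pp.2))).filter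
    (fun q => lab m σ (pp.2, q) < lab m σ (pp.1, q)) with hg
  -- Step A: Tfin ≃ sigma
  have hA : (Tfin M m σ).card = (Doff.sigma g).card := by
    refine Finset.card_bij' (fun x _ => ⟨(x.1.1, x.2), x.1.2⟩)
      (fun y _ => ((y.1.1, y.2), y.1.2)) ?_ ?_ ?_ ?_
    · rintro ⟨⟨p, q⟩, p'⟩ hx
      simp only [Tfin, Finset.mem_filter, Finset.mem_product, Finset.mem_range] at hx
      obtain ⟨⟨⟨hp, _⟩, hp'⟩, hq, hne, hq', hl⟩ := hx
      simp only [Finset.mem_sigma, hDoff, hg, Finset.mem_filter, Finset.mem_product,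
        Finset.mem_range]
      exact ⟨⟨⟨hp, hp'⟩, fun h => hne h.symm⟩, by simp [lt_min_iff]; exact ⟨⟨hq, hq'⟩, hl⟩⟩
    · rintro ⟨⟨p, p'⟩, q⟩ hy
      simp only [Finset.mem_sigma, hDoff, hg, Finset.mem_filter, Finset.mem_product,
        Finset.mem_range, lt_min_iff] at hy
      obtain ⟨⟨⟨hp, hp'⟩, hne⟩, ⟨hq, hq'⟩, hl⟩ := hy
      simp only [Tfin, Finset.mem_filter, Finset.mem_product, Finset.mem_range]
      exact ⟨⟨⟨hp, by
        have h1 := hpart p hp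
        have hb : part p = M.getD p 0 := rfl
        omega⟩, hp'⟩, hq, fun h => hne h.symm, hq', hl⟩
    · rintro ⟨⟨p, q⟩, p'⟩ _; rfl
    · rintro ⟨⟨p, p'⟩, q⟩ _; rfl
  rw [hA, Finset.card_sigma]
  -- Step C: split by <
  have hsplit := Finset.sum_filter_add_sum_filter_not Doff (fun pp => pp.1 < pp.2)
    (fun pp => (g pp).card)
  set Dlt := (Finset.range len ×ˢ Finset.range len).filter (fun pp => pp.1 < pp.2) with hDlt
  have hflt : Doff.filter (fun pp => pp.1 < pp.2) = Dlt := by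
    ext ⟨p, p'⟩
    simp only [hDoff, hDlt, Finset.mem_filter, Finset.mem_product, Finset.mem_range]
    constructor
    · rintro ⟨⟨h1, _⟩, h2⟩; exact ⟨h1, h2⟩
    · rintro ⟨h1, h2⟩; exact ⟨⟨h1, by omega⟩, h2⟩
  have hfgt : Doff.filter (fun pp => ¬ pp.1 < pp.2) = Dlt.image Prod.swap := by
    ext ⟨p, p'⟩
    simp only [hDoff, hDlt, Finset.mem_filter, Finset.mem_product, Finset.mem_range,
      Finset.mem_image, Prod.exists]
    constructor
    · rintro ⟨⟨⟨h1, h2⟩, h3⟩, h4⟩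
      exact ⟨p', p, ⟨⟨h2, h1⟩, by omega⟩, rfl⟩
    · rintro ⟨a, b, ⟨⟨h1, h2⟩, h3⟩, heq⟩
      obtain ⟨rfl, rfl⟩ : b = p ∧ a = p' := by
        constructor
        · exact (congrArg Prod.fst heq)
        · exact (congrArg Prod.snd heq)
      exact ⟨⟨⟨h2, h1⟩, by omega⟩, by omega⟩
  have hswap : ∑ pp ∈ Dlt.image Prod.swap, (g pp).card = ∑ pp ∈ Dlt, (g pp.swap).card := by
    rw [Finset.sum_image]
    intro x _ y _ hxy
    exact Prod.swap_injective hxy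
  rw [← hsplit, hflt, hfgt, hswap, ← Finset.sum_add_distrib]
  -- Step D: each lt-pair contributes min
  have hD : ∀ pp ∈ Dlt, (g pp).card + (g pp.swap).card = min (part pp.1) (part pp.2) := by
    rintro ⟨p, p'⟩ hpp
    simp only [hDlt, Finset.mem_filter, Finset.mem_product, Finset.mem_range] at hpp
    obtain ⟨⟨hp, hp'⟩, hlt⟩ := hpp
    have hmin : min (part p') (part p) = min (part p) (part p') := Nat.min_comm _ _
    have hgswap : (g (Prod.swap (p, p'))).card =
        ((Finset.range (min (part p) (part p'))).filter
          (fun q => ¬ lab m σ (p', q) < lab m σ (p, q))).card := by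
      simp only [hg, Prod.swap]
      rw [hmin]
      congr 1
      refine Finset.filter_congr ?_
      intro q hq
      simp only [Finset.mem_range, lt_min_iff] at hq
      have hcp : ((p, q) : ℕ × ℕ) ∈ cells M := ⟨hp, hq.1⟩
      have hcp' : ((p', q) : ℕ × ℕ) ∈ cells M := ⟨hp', hq.2⟩
      have hs1 := lab_spec hσ.1 hcp
      have hs2 := lab_spec hσ.1 hcp'
      have hne : lab m σ (p, q) ≠ lab m σ (p', q) := by
        intro h
        have : ((p, q) : ℕ × ℕ) = (p', q) := by rw [← hs1.2, ← hs2.2, h]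
        have : p = p' := congrArg Prod.fst this
        omega
      constructor
      · intro h; simp; omega
      · intro h; simp at h; omega
    rw [hgswap, hg]
    simp only
    rw [Finset.card_filter_add_card_filter_not]
    · simp
  rw [Finset.sum_congr rfl hD]
  -- Step E: sum of mins = dimB
  have hE : ∀ pp ∈ Dlt, min (part pp.1) (part pp.2) = part pp.2 := by
    rintro ⟨p, p'⟩ hpp
    simp only [hDlt, Finset.mem_filter, Finset.mem_product, Finset.mem_range] at hpp
    exact Nat.min_eq_right (sorted_getD hsort (le_of_lt hpp.2) hpp.1.2)
  rw [Finset.sum_congr rfl hE]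
  rw [hDlt, Finset.sum_filter, Finset.sum_product]
  rw [Finset.sum_comm]
  rw [dimB]
  refine Finset.sum_congr rfl ?_
  intro p' hp'
  simp only [Finset.mem_range] at hp'
  have : ∑ p ∈ Finset.range len, (if p < p' then part p' else 0) =
      ∑ p ∈ (Finset.range len).filter (fun p => p < p'), part p' := by
    rw [Finset.sum_filter]
  rw [this]
  have hfilter : (Finset.range len).filter (fun p => p < p') = Finset.range p' := by
    ext q
    simp only [Finset.mem_filter, Finset.mem_range]
    omega
  rw [hfilter, Finset.sum_const, Finset.card_range, smul_eq_mul]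

lemma pairsCount_eq_dimB (hσ : IsRST M m σ) (hsum : M.sum = m) (hsort : M.Pairwise (· ≥ ·)) :
    pairsCount m σ = dimB M := by
  rw [pairs_eq_Tfin hσ hsum, Tfin_card hσ hsum hsort]

end Counting2

section InvRel

variable {L : List ℕ} {n d : ℕ} {σ : ℕ → ℕ × ℕ}

lemma partner_dvd (hd : TabDivisor n d σ) {i j : ℕ} (h : SpringerPair n σ i j) : d ∣ j := by
  by_contra hdj
  obtain ⟨h1, h2, h3, h4, h5⟩ := h
  obtain ⟨hjn, hstep⟩ := hd.step (by simp; omega) hdj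
  have := h5 (j+1) (by simp; omega) hstep
  omega

lemma mul_lemma {d a : ℕ} (ha : 1 ≤ a) : d*(a-1)+d = d*a := by
  have h1 := Nat.mul_sub d a 1
  have h2 : d * 1 ≤ d * a := Nat.mul_le_mul_left d ha
  omega

lemma sp_corr (hσ : IsRST L n σ) (hd : TabDivisor n d σ) (hd0 : 0 < d) {a b s : ℕ}
    (ha : a ∈ Set.Icc 1 (n/d)) (hb : b ∈ Set.Icc 1 (n/d)) (hs1 : 1 ≤ s) (hsd : s ≤ d) :
    SpringerPair n σ (d*(a-1)+s) (d*b) ↔ SpringerPair (n/d) (quotTab d σ) a b := by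
  have ha' := ha; simp only [Set.mem_Icc] at ha'
  have hb' := hb; simp only [Set.mem_Icc] at hb'
  have hMi := hd.master hσ hd0 ha hs1 hsd
  have hMb := hd.last_box hσ hd0 hb
  have hmula := mul_lemma (d := d) ha'.1
  have hmulb := mul_lemma (d := d) hb'.1
  constructor
  · rintro ⟨h1, h2, h3, h4, h5⟩
    refine ⟨hb'.1, ?_, ha'.2, ?_, ?_⟩
    · -- b < a
      have hba : d*b < d*a := by omega
      exact Nat.lt_of_mul_lt_mul_left hba
    · -- columns
      rw [hMi, hMb] at h4
      have h4' : d * ((quotTab d σ) a).2 + (s-1) ≤ d * ((quotTab d σ) b).2 + (d-1) := h4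
      by_contra hcon
      push_neg at hcon
      have hc1 : ((quotTab d σ) b).2 + 1 ≤ ((quotTab d σ) a).2 := hcon
      have hc2 : d * (((quotTab d σ) b).2 + 1) ≤ d * ((quotTab d σ) a).2 := Nat.mul_le_mul_left d hc1
      have hc3 : d * (((quotTab d σ) b).2 + 1) = d * ((quotTab d σ) b).2 + d := by ring
      omega
    · -- neighbor
      intro r' hr' hqr'
      have hr : d*(r'-1)+1 ∈ Set.Icc 1 n := dmul_mem hd.1 hr' le_rfl hd0
      have hfb := hd.first_box hσ hd0 hr'
      have hσr : σ (d*(r'-1)+1) = ((σ (d*b)).1, (σ (d*b)).2 + 1) := by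
        rw [hfb, hqr', hMb]
        show (((quotTab d σ) b).1, d * (((quotTab d σ) b).2 + 1)) = (((quotTab d σ) b).1, d * ((quotTab d σ) b).2 + (d-1) + 1)
        have : d * (((quotTab d σ) b).2 + 1) = d * ((quotTab d σ) b).2 + d := by ring
        simp only [Prod.mk.injEq, true_and]
        omega
      have := h5 _ hr hσr
      -- d*(a-1)+s < d*(r'-1)+1  →  a < r'
      have hr'1 : 1 ≤ r' := by simp at hr'; omega
      have haa : d*(a-1) < d*(r'-1) := by omega
      have := Nat.lt_of_mul_lt_mul_left haa
      omega
  · rintro ⟨h1, h2, h3, h4, h5⟩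
    have hab : d * b ≤ d * (a-1) := Nat.mul_le_mul_left d (by omega)
    refine ⟨Nat.mul_pos hd0 hb'.1, by omega, ?_, ?_, ?_⟩
    · have := dmul_mem hd.1 ha hs1 hsd
      simp at this; omega
    · rw [hMi, hMb]
      show d * ((quotTab d σ) a).2 + (s-1) ≤ d * ((quotTab d σ) b).2 + (d-1)
      have := Nat.mul_le_mul_left d h4
      omega
    · intro r hrm hσr
      rw [hMb] at hσr
      have hcolr : (σ r).2 = d * ((quotTab d σ) b).2 + d := by
        rw [hσr]
        show d * ((quotTab d σ) b).2 + (d-1) + 1 = d * ((quotTab d σ) b).2 + d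
        omega
      have hmod := hd.col_mod hσ.1 hd0 hrm
      rw [hcolr] at hmod
      have hmod0 : (r - 1) % d = 0 := by
        rw [← hmod, show d * ((quotTab d σ) b).2 + d = d * (((quotTab d σ) b).2 + 1) by ring, Nat.mul_mod_right]
      obtain ⟨har, hsr, hir⟩ := idx_decomp hd.1 hd0 hrm
      rw [hmod0] at hsr hir
      simp only [Nat.zero_add] at hir
      set ar := (r-1)/d + 1 with harr
      have hfb := hd.first_box hσ hd0 har
      rw [← hir] at hfb
      have hcomb : ((quotTab d σ ar).1, d * (quotTab d σ ar).2) =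
          ((quotTab d σ b).1, d * (quotTab d σ b).2 + (d-1) + 1) := by
        rw [← hfb, hσr]
      have hrow : ((quotTab d σ) ar).1 = ((quotTab d σ) b).1 := by
        have := congrArg Prod.fst hcomb; simpa using this
      have hcol2 : d * ((quotTab d σ) ar).2 = d * ((quotTab d σ) b).2 + d := by
        have := congrArg Prod.snd hcomb; simp at this; omega
      have hcol3 : ((quotTab d σ) ar).2 = ((quotTab d σ) b).2 + 1 := by
        refine Nat.eq_of_mul_eq_mul_left hd0 ?_
        rw [hcol2]; ring
      have haar : a < ar := by
        refine h5 ar har ?_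
        ext
        · exact hrow
        · exact hcol3
      -- conclude d*(a-1)+s < r
      have h6 : d * a ≤ d * (ar - 1) := Nat.mul_le_mul_left d (by omega)
      have hr'1 : 1 ≤ ar := by simp at har; omega
      omega

lemma si_corr_mid (hσ : IsRST L n σ) (hd : TabDivisor n d σ) (hd0 : 0 < d) {a b s : ℕ}
    (ha : a ∈ Set.Icc 1 (n/d)) (hb : b ∈ Set.Icc 1 (n/d)) (hs1 : 1 ≤ s) (hsd : s ≤ d - 1) :
    SpringerInv n σ (d*(a-1)+s) (d*b) ↔ SpringerPair (n/d) (quotTab d σ) a b := by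
  have hd2 : 2 ≤ d := by omega
  have hMi := hd.master hσ hd0 ha hs1 (by omega)
  have hMb := hd.last_box hσ hd0 hb
  constructor
  · rintro ⟨hp, _⟩
    exact (sp_corr hσ hd hd0 ha hb hs1 (by omega)).mp hp
  · intro hp
    refine ⟨(sp_corr hσ hd hd0 ha hb hs1 (by omega)).mpr hp, ?_⟩
    intro hcol
    exfalso
    rw [hMi, hMb] at hcol
    have hcol' : d * (quotTab d σ a).2 + (s-1) = d * (quotTab d σ b).2 + (d-1) := hcol
    -- mod d : s-1 ≡ d-1, but s-1 < d-1
    have h1 : (d * (quotTab d σ a).2 + (s-1)) % d = (s-1) % d := by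
      rw [Nat.mul_add_mod]
    have h2 : (d * (quotTab d σ b).2 + (d-1)) % d = (d-1) % d := by
      rw [Nat.mul_add_mod]
    have h3 : (d * (quotTab d σ a).2 + (s-1)) % d = (d * (quotTab d σ b).2 + (d-1)) % d := by
      rw [hcol']
    rw [Nat.mod_eq_of_lt (show s - 1 < d by omega)] at h1
    rw [Nat.mod_eq_of_lt (show d - 1 < d by omega)] at h2
    omega

lemma si_corr_last (hσ : IsRST L n σ) (hd : TabDivisor n d σ) (hd0 : 0 < d) {a b : ℕ}
    (ha : a ∈ Set.Icc 1 (n/d)) (hb : b ∈ Set.Icc 1 (n/d)) :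
    SpringerInv n σ (d*a) (d*b) ↔ SpringerInv (n/d) (quotTab d σ) a b := by
  have ha' := ha; simp only [Set.mem_Icc] at ha'
  have hmula := mul_lemma (d := d) ha'.1
  have hMa := hd.last_box hσ hd0 ha
  have hMb := hd.last_box hσ hd0 hb
  have hsp : SpringerPair n σ (d*a) (d*b) ↔ SpringerPair (n/d) (quotTab d σ) a b := by
    rw [← hmula]
    exact sp_corr hσ hd hd0 ha hb (by omega) le_rfl
  unfold SpringerInv
  rw [hsp, hMa, hMb]
  constructor
  · rintro ⟨hp, hc⟩
    refine ⟨hp, fun hceq => ?_⟩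
    have := hc (by
      show d * (quotTab d σ a).2 + (d-1) = d * (quotTab d σ b).2 + (d-1)
      rw [hceq])
    exact this
  · rintro ⟨hp, hc⟩
    refine ⟨hp, fun hceq => ?_⟩
    have hceq' : d * (quotTab d σ a).2 + (d-1) = d * (quotTab d σ b).2 + (d-1) := hceq
    have : (quotTab d σ a).2 = (quotTab d σ b).2 :=
      Nat.eq_of_mul_eq_mul_left hd0 (by omega)
    exact hc this

end InvRel

section InvCountRel

variable {L : List ℕ} {n d : ℕ} {σ : ℕ → ℕ × ℕ}

lemma sp_set_finite (n : ℕ) (pos : ℕ → ℕ × ℕ) :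
    {x : ℕ × ℕ | SpringerPair n pos x.1 x.2}.Finite := by
  refine (Set.finite_Icc ((1,1) : ℕ × ℕ) (n,n)).subset ?_
  rintro ⟨i, j⟩ ⟨h1, h2, h3, _⟩
  simp only [Set.mem_Icc, Prod.le_def]
  omega

lemma si_set_finite (n : ℕ) (pos : ℕ → ℕ × ℕ) :
    {x : ℕ × ℕ | SpringerInv n pos x.1 x.2}.Finite :=
  (sp_set_finite n pos).subset (fun x hx => hx.1)

lemma invCount_rel (hσ : IsRST L n σ) (hd : TabDivisor n d σ) (hd0 : 0 < d) :
    invCount n σ = invCount (n/d) (quotTab d σ) + (d-1) * pairsCount (n/d) (quotTab d σ) := by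
  classical
  set τ := quotTab d σ with hτ
  set SI := {x : ℕ × ℕ | SpringerInv n σ x.1 x.2} with hSI
  set SPq := {x : ℕ × ℕ | SpringerPair (n/d) τ x.1 x.2} with hSPq
  set SIq := {x : ℕ × ℕ | SpringerInv (n/d) τ x.1 x.2} with hSIq
  set ψ1 : (ℕ × ℕ) × ℕ → ℕ × ℕ := fun y => (d*(y.1.1 - 1) + y.2, d * y.1.2) with hψ1
  set ψ2 : ℕ × ℕ → ℕ × ℕ := fun y => (d*y.1, d*y.2) with hψ2
  have hpmem : ∀ {x : ℕ × ℕ}, x ∈ SPq → x.1 ∈ Set.Icc 1 (n/d) ∧ x.2 ∈ Set.Icc 1 (n/d) := by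
    rintro ⟨a, b⟩ ⟨h1, h2, h3, _⟩
    simp only [Set.mem_Icc]
    exact ⟨⟨by omega, h3⟩, ⟨h1, by omega⟩⟩
  -- decomposition of elements of SI
  have hdecomp : ∀ i j : ℕ, SpringerPair n σ i j →
      ∃ a b s, a ∈ Set.Icc 1 (n/d) ∧ b ∈ Set.Icc 1 (n/d) ∧ 1 ≤ s ∧ s ≤ d ∧
        i = d*(a-1)+s ∧ j = d*b ∧ (d ∣ i ↔ s = d) := by
    intro i j hp
    have hi : i ∈ Set.Icc 1 n := by
      have h1 := hp.1; have h2 := hp.2.1; have h3 := hp.2.2.1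
      simp; omega
    have hj1 := hp.1
    have hj2 := hp.2.1
    have hj : j ∈ Set.Icc 1 n := by simp at hi ⊢; omega
    obtain ⟨b, hjb⟩ := partner_dvd hd hp
    obtain ⟨ha, hs, hi_eq⟩ := idx_decomp hd.1 hd0 hi
    have hb : b ∈ Set.Icc 1 (n/d) := by
      simp only [Set.mem_Icc] at hj ⊢
      constructor
      · rcases Nat.eq_zero_or_pos b with rfl | h
        · rw [Nat.mul_zero] at hjb; omega
        · exact h
      · refine (Nat.le_div_iff_mul_le hd0).mpr ?_
        rw [Nat.mul_comm, ← hjb]; exact hj.2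
    refine ⟨(i-1)/d + 1, b, (i-1)%d + 1, ha, hb, by omega, by
      simp only [Set.mem_Icc] at hs; omega, hi_eq, hjb, ?_⟩
    simp only [Set.mem_Icc] at hs ha
    constructor
    · intro hdvd
      by_contra hne
      have hlt : (i-1)%d + 1 ≤ d - 1 := by omega
      have hdvd2 : d ∣ ((i-1)%d + 1) := by
        have h0 : d ∣ d * ((i-1)/d + 1 - 1) := Dvd.intro _ rfl
        rw [hi_eq] at hdvd
        exact (Nat.dvd_add_right h0).mp hdvd
      have := Nat.le_of_dvd (by omega) hdvd2
      omega
    · intro hseq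
      rw [hi_eq, hseq, mul_lemma (by omega : 1 ≤ (i-1)/d + 1)]
      exact Dvd.intro _ rfl
  have hAeq : SI ∩ {x | ¬ d ∣ x.1} = ψ1 '' (SPq ×ˢ Set.Ico 1 d) := by
    ext x
    constructor
    · rintro ⟨hsi, hnd⟩
      have hsi' : SpringerInv n σ x.1 x.2 := hsi
      obtain ⟨a, b, s, ha, hb, hs1, hsd, hieq, hjeq, hdvd_iff⟩ := hdecomp x.1 x.2 hsi'.1
      have hsd' : s ≤ d - 1 := by
        rcases Nat.eq_or_lt_of_le hsd with h | h
        · exact absurd (hdvd_iff.mpr h) hnd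
        · omega
      have hsi2 : SpringerInv n σ (d*(a-1)+s) (d*b) := by
        rw [← hieq, ← hjeq]; exact hsi'
      have hpq : ((a, b) : ℕ × ℕ) ∈ SPq :=
        (si_corr_mid hσ hd hd0 ha hb hs1 hsd').mp hsi2
      refine ⟨((a, b), s), ?_, ?_⟩
      · simp only [Set.mem_prod, Set.mem_Ico]
        exact ⟨hpq, hs1, by omega⟩
      · show ((d*(a-1)+s, d*b) : ℕ × ℕ) = x
        rw [Prod.ext_iff]
        exact ⟨hieq.symm, hjeq.symm⟩
    · rintro ⟨⟨⟨a, b⟩, s⟩, hy, rfl⟩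
      simp only [Set.mem_prod, Set.mem_Ico] at hy
      obtain ⟨hpq, hs1, hsd⟩ := hy
      obtain ⟨hamem, hbmem⟩ := hpmem hpq
      constructor
      · exact (si_corr_mid hσ hd hd0 hamem hbmem hs1 (by omega)).mpr hpq
      · show ¬ d ∣ (d*(a-1)+s)
        intro hdvd
        have h0 : d ∣ d * (a - 1) := Dvd.intro _ rfl
        have h1 := (Nat.dvd_add_right h0).mp hdvd
        have := Nat.le_of_dvd (by omega) h1
        omega
  have hBeq : SI ∩ {x | d ∣ x.1} = ψ2 '' SIq := by
    ext x
    constructor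
    · rintro ⟨hsi, hnd⟩
      have hsi' : SpringerInv n σ x.1 x.2 := hsi
      obtain ⟨a, b, s, ha, hb, hs1, hsd, hieq, hjeq, hdvd_iff⟩ := hdecomp x.1 x.2 hsi'.1
      have hseq : s = d := hdvd_iff.mp hnd
      have haeq : x.1 = d * a := by
        rw [hieq, hseq, mul_lemma (by simp at ha; omega)]
      have hsi2 : SpringerInv n σ (d*a) (d*b) := by
        rw [← haeq, ← hjeq]; exact hsi'
      have hiq : ((a, b) : ℕ × ℕ) ∈ SIq := (si_corr_last hσ hd hd0 ha hb).mp hsi2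
      refine ⟨(a, b), hiq, ?_⟩
      show ((d*a, d*b) : ℕ × ℕ) = x
      rw [Prod.ext_iff]
      exact ⟨haeq.symm, hjeq.symm⟩
    · rintro ⟨⟨a, b⟩, hy, rfl⟩
      have hy' : SpringerInv (n/d) τ a b := hy
      obtain ⟨hamem, hbmem⟩ := hpmem (show ((a,b) : ℕ × ℕ) ∈ SPq from hy'.1)
      constructor
      · exact (si_corr_last hσ hd hd0 hamem hbmem).mpr hy'
      · show d ∣ d * a
        exact Dvd.intro _ rfl
  -- injectivity
  have hinj1 : Set.InjOn ψ1 (SPq ×ˢ Set.Ico 1 d) := by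
    rintro ⟨⟨a, b⟩, s⟩ h1 ⟨⟨a', b'⟩, s'⟩ h2 heq
    simp only [Set.mem_prod, Set.mem_Ico] at h1 h2
    simp only [hψ1, Prod.mk.injEq] at heq
    obtain ⟨hx, hy⟩ := heq
    have hb : b = b' := Nat.eq_of_mul_eq_mul_left hd0 hy
    have ha1 : 1 ≤ a := by have := h1.1.2.1; have := h1.1.1; omega
    have ha1' : 1 ≤ a' := by have := h2.1.2.1; have := h2.1.1; omega
    have hdiv : ∀ (u v : ℕ), 1 ≤ v → v < d → (d*u + v - 1)/d = u := by
      intro u v hv1 hvd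
      rw [show d*u + v - 1 = d*u + (v-1) by omega, Nat.mul_add_div hd0,
        Nat.div_eq_of_lt (by omega)]
      omega
    have hda : a - 1 = a' - 1 := by
      have e1 := hdiv (a-1) s h1.2.1 h1.2.2
      have e2 := hdiv (a'-1) s' h2.2.1 h2.2.2
      rw [← e1, ← e2, hx]
    have ha : a = a' := by omega
    have hs : s = s' := by
      rw [ha] at hx
      omega
    simp [ha, hb, hs]
  have hinj2 : Set.InjOn ψ2 SIq := by
    rintro ⟨a, b⟩ _ ⟨a', b'⟩ _ heq
    simp only [hψ2, Prod.mk.injEq] at heq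
    simp [Nat.eq_of_mul_eq_mul_left hd0 heq.1, Nat.eq_of_mul_eq_mul_left hd0 heq.2]
  -- finiteness
  have hfinSI : SI.Finite := si_set_finite n σ
  have hfinSP : SPq.Finite := sp_set_finite (n/d) τ
  have hfinSIq : SIq.Finite := si_set_finite (n/d) τ
  -- split
  have hsplit : SI = (SI ∩ {x | ¬ d ∣ x.1}) ∪ (SI ∩ {x | d ∣ x.1}) := by
    ext x
    simp only [Set.mem_union, Set.mem_inter_iff, Set.mem_setOf_eq]
    tauto
  have hdisj : Disjoint (SI ∩ {x | ¬ d ∣ x.1}) (SI ∩ {x | d ∣ x.1}) := by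
    rw [Set.disjoint_left]
    rintro x ⟨_, h1⟩ ⟨_, h2⟩
    exact h1 h2
  have hcard : invCount n σ = (SI ∩ {x | ¬ d ∣ x.1}).ncard + (SI ∩ {x | d ∣ x.1}).ncard := by
    rw [invCount, ← Set.ncard_union_eq hdisj (hfinSI.subset Set.inter_subset_left)
      (hfinSI.subset Set.inter_subset_left), ← hsplit]
  rw [hcard, hAeq, hBeq]
  rw [Set.ncard_image_of_injOn hinj1, Set.ncard_image_of_injOn hinj2]
  have hprodeq : SPq ×ˢ Set.Ico 1 d = ↑(hfinSP.toFinset ×ˢ Finset.Ico 1 d) := by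
    rw [Finset.coe_product, Set.Finite.coe_toFinset, Finset.coe_Ico]
  rw [hprodeq, Set.ncard_coe_finset, Finset.card_product, Nat.card_Ico]
  rw [invCount, pairsCount]
  rw [Set.ncard_eq_toFinset_card SPq hfinSP]
  ring
end InvCountRel

section Inflate

variable {L : List ℕ} {n d : ℕ} {τ : ℕ → ℕ × ℕ}

/-- the inflation of a tableau: each box becomes a block of `d` boxes -/
noncomputable def inflate (n d : ℕ) (τ : ℕ → ℕ × ℕ) : ℕ → ℕ × ℕ :=
  fun i => if i ∈ Set.Icc 1 n then
    ((τ ((i-1)/d + 1)).1, d * (τ ((i-1)/d + 1)).2 + (i-1) % d) else (0,0)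

lemma unique_rep (hd0 : 0 < d) {C s C' s' : ℕ} (hs : s < d) (hs' : s' < d)
    (h : d*C+s = d*C'+s') : C = C' ∧ s = s' := by
  have h1 : (d*C+s) % d = s := by rw [Nat.mul_add_mod]; exact Nat.mod_eq_of_lt hs
  have h2 : (d*C'+s') % d = s' := by rw [Nat.mul_add_mod]; exact Nat.mod_eq_of_lt hs'
  have hss : s = s' := by rw [← h1, ← h2, h]
  refine ⟨Nat.eq_of_mul_eq_mul_left hd0 (by omega), hss⟩

lemma dvd_iff_pred_mod (hd0 : 0 < d) {i : ℕ} (hi : 1 ≤ i) :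
    d ∣ i ↔ (i-1) % d = d - 1 := by
  rcases Nat.lt_or_ge d 2 with hd1 | hd2
  · have : d = 1 := by omega
    simp [this, Nat.mod_one]
  constructor
  · rintro ⟨k, rfl⟩
    have hk1 : 1 ≤ k := by
      rcases Nat.eq_zero_or_pos k with rfl | h
      · simp at hi
      · exact h
    exact pred_mul_mod hd2 hk1
  · intro h
    have := Nat.div_add_mod (i-1) d
    refine ⟨(i-1)/d + 1, ?_⟩
    have h2 : d * ((i-1)/d + 1) = d * ((i-1)/d) + d := by ring
    omega

variable (hL : IsPartition L n) (hd0 : 0 < d) (hdn : d ∣ n)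
  (hdvd : ∀ p < L.length, d ∣ L.getD p 0)
  (hτ : IsRST (L.map (· / d)) (n/d) τ)

section
include hL hd0 hdn hdvd hτ

lemma inflate_coords {i : ℕ} (hi : i ∈ Set.Icc 1 n) :
    inflate n d τ i = ((τ ((i-1)/d + 1)).1, d * (τ ((i-1)/d + 1)).2 + (i-1) % d) := by
  rw [inflate, if_pos hi]

lemma inflate_isRST : IsRST L n (inflate n d τ) := by
  have hblock : ∀ {i : ℕ}, i ∈ Set.Icc 1 n → ((i-1)/d + 1) ∈ Set.Icc 1 (n/d) :=
    fun hi => (idx_decomp hdn hd0 hi).1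
  have hmodlt : ∀ (i : ℕ), (i-1) % d < d := fun i => Nat.mod_lt _ hd0
  constructor; constructor
  · -- InjOn
    intro i hi i' hi' heq
    rw [inflate_coords hL hd0 hdn hdvd hτ hi, inflate_coords hL hd0 hdn hdvd hτ hi'] at heq
    have hrow := congrArg Prod.fst heq
    have hcol := congrArg Prod.snd heq
    simp only at hrow hcol
    obtain ⟨hC, hs⟩ := unique_rep hd0 (hmodlt i) (hmodlt i') hcol
    have hbb : τ ((i-1)/d + 1) = τ ((i'-1)/d + 1) := by
      rw [Prod.ext_iff]; exact ⟨hrow, hC⟩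
    have := hτ.1.1 (hblock hi) (hblock hi') hbb
    have hd1 : (i-1)/d = (i'-1)/d := by omega
    have e1 := Nat.div_add_mod (i-1) d
    have e2 := Nat.div_add_mod (i'-1) d
    rw [hd1, hs] at e1
    simp only [Set.mem_Icc] at hi hi'
    omega
  constructor
  · -- image
    ext ⟨p, c⟩
    simp only [Set.mem_image]
    constructor
    · rintro ⟨i, hi, hval⟩
      rw [inflate_coords hL hd0 hdn hdvd hτ hi] at hval
      have hcell := hτ.1.mem_cells (hblock hi)
      set b := (i-1)/d + 1 with hb
      have hcell2 : (τ b).1 < L.length ∧ (τ b).2 < L.getD (τ b).1 0 / d := by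
        have h1 := hcell.1
        have h2 := hcell.2
        rw [List.length_map] at h1
        constructor
        · exact h1
        · have := getD_map_div L d (τ b).1
          rw [← this]
          exact h2
      have hrow : p = (τ b).1 := (congrArg Prod.fst hval).symm
      have hcol : c = d * (τ b).2 + (i-1) % d := (congrArg Prod.snd hval).symm
      refine ⟨by rw [hrow]; exact hcell2.1, ?_⟩
      show c < L.getD p 0
      rw [hcol, hrow]
      have h3 : (τ b).2 + 1 ≤ L.getD (τ b).1 0 / d := hcell2.2
      have h4 := Nat.mul_le_mul_left d h3
      have h5 : d * (L.getD (τ b).1 0 / d) = L.getD (τ b).1 0 := by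
        obtain ⟨k, hk⟩ := hdvd (τ b).1 hcell2.1
        rw [hk, Nat.mul_div_cancel_left _ hd0]
      have h6 : d * ((τ b).2 + 1) = d * (τ b).2 + d := by ring
      have := hmodlt i
      omega
    · rintro ⟨hp, hc⟩
      have hcd : c / d < L.getD p 0 / d := by
        refine Nat.div_lt_div_of_lt_of_dvd (hdvd p hp) hc
      have hcell' : ((p, c/d) : ℕ × ℕ) ∈ cells (L.map (· / d)) :=
        mem_cells_map.mpr ⟨hp, hcd⟩
      obtain ⟨b, hbmem, hbeq⟩ := hτ.1.surj hcell'
      have hb' := hbmem; simp only [Set.mem_Icc] at hb'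
      refine ⟨d*(b-1) + c % d + 1, ?_, ?_⟩
      · have := dmul_mem hdn hbmem (s := c % d + 1) (by omega) (Nat.mod_lt _ hd0)
        rw [show d*(b-1) + (c % d + 1) = d*(b-1) + c % d + 1 by omega] at this
        exact this
      · have hq : (d*(b-1) + c % d + 1 - 1)/d = b - 1 := by
          rw [Nat.add_sub_cancel, Nat.mul_add_div hd0, Nat.div_eq_of_lt (Nat.mod_lt _ hd0)]
          omega
        have hm : (d*(b-1) + c % d + 1 - 1) % d = c % d := by
          rw [Nat.add_sub_cancel, Nat.mul_add_mod]
          exact Nat.mod_eq_of_lt (Nat.mod_lt _ hd0)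
        rw [inflate_coords hL hd0 hdn hdvd hτ (by
          have := dmul_mem hdn hbmem (s := c % d + 1) (by omega) (Nat.mod_lt _ hd0)
          rw [show d*(b-1) + (c % d + 1) = d*(b-1) + c % d + 1 by omega] at this
          exact this)]
        rw [hq, hm, show b - 1 + 1 = b by omega, hbeq]
        show ((p, d * (c/d) + c % d) : ℕ × ℕ) = (p, c)
        rw [Prod.ext_iff]
        exact ⟨rfl, Nat.div_add_mod c d⟩
  · -- outside
    intro i hi
    rw [inflate, if_neg hi]
  · -- RowStrict
    intro i j hi hj hrow hcol
    rw [inflate_coords hL hd0 hdn hdvd hτ hi, inflate_coords hL hd0 hdn hdvd hτ hj]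
      at hrow hcol
    simp only at hrow hcol
    set bi := (i-1)/d + 1 with hbi
    set bj := (j-1)/d + 1 with hbj
    rcases Nat.lt_or_ge ((i-1) % d) (d - 1) with hcase | hcase
    · -- same block
      have hcol' : d * (τ bj).2 + (j-1) % d = d * (τ bi).2 + ((i-1) % d + 1) := hcol
      obtain ⟨hC, hs⟩ := unique_rep hd0 (Nat.mod_lt _ hd0) (by omega) hcol'
      have hbb : τ bj = τ bi := by rw [Prod.ext_iff]; exact ⟨hrow, hC⟩
      have hbeq := hτ.1.1 (hblock hj) (hblock hi) hbb
      have hd1 : (j-1)/d = (i-1)/d := by omega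
      have e1 := Nat.div_add_mod (i-1) d
      have e2 := Nat.div_add_mod (j-1) d
      rw [hd1, hs] at e2
      simp only [Set.mem_Icc] at hi hj
      omega
    · -- i is last in its block
      have hceq : (i-1) % d = d - 1 := by have := Nat.mod_lt (i-1) hd0; omega
      have hcol' : d * (τ bj).2 + (j-1) % d = d * ((τ bi).2 + 1) + 0 := by
        have h6 : d * ((τ bi).2 + 1) = d * (τ bi).2 + d := by ring
        omega
      obtain ⟨hC, hs⟩ := unique_rep hd0 (Nat.mod_lt _ hd0) hd0 hcol'
      have hblt : bi < bj := by
        refine hτ.2 bi bj (hblock hi) (hblock hj) hrow ?_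
        rw [hC]
      have e1 := Nat.div_add_mod (i-1) d
      have e2 := Nat.div_add_mod (j-1) d
      have h7 : (i-1)/d + 1 ≤ (j-1)/d := by omega
      have h8 := Nat.mul_le_mul_left d h7
      have h9 : d * ((i-1)/d + 1) = d * ((i-1)/d) + d := by ring
      simp only [Set.mem_Icc] at hi hj
      omega

lemma inflate_div : TabDivisor n d (inflate n d τ) := by
  refine ⟨hdn, fun i hi1 hin hdi => ?_⟩
  have hi : i ∈ Set.Icc 1 n := by simp; omega
  have hi' : i + 1 ∈ Set.Icc 1 n := by simp; omega
  rw [inflate_coords hL hd0 hdn hdvd hτ hi, inflate_coords hL hd0 hdn hdvd hτ hi']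
  have hne : (i-1) % d ≠ d - 1 := fun h => hdi ((dvd_iff_pred_mod hd0 hi1).mpr h)
  have hlt : (i-1) % d < d - 1 := by have := Nat.mod_lt (i-1) hd0; omega
  have hq0 : i / d = (i-1)/d := by
    have h := @Nat.succ_div (i-1) d
    rw [show i - 1 + 1 = i by omega] at h
    rw [h, if_neg hdi, Nat.add_zero]
  have hq : (i + 1 - 1)/d = (i-1)/d := by rw [Nat.add_sub_cancel]; exact hq0
  have hm : (i + 1 - 1) % d = (i-1) % d + 1 := by
    rw [Nat.add_sub_cancel]
    have e1 := Nat.div_add_mod (i-1) d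
    have e2 := Nat.div_add_mod i d
    rw [hq0] at e2
    omega
  rw [hq, hm]
  show (_, d * (τ ((i-1)/d + 1)).2 + ((i-1) % d + 1)) = (_, d * (τ ((i-1)/d + 1)).2 + (i-1) % d + 1)
  rw [Prod.ext_iff]
  exact ⟨rfl, by omega⟩

lemma inflate_quot : quotTab d (inflate n d τ) = τ := by
  funext b
  by_cases hb : b ∈ Set.Icc 1 (n/d)
  · have hmem : d * b ∈ Set.Icc 1 n := by
      have := dmul_mem hdn hb (s := d) hd0 le_rfl
      rwa [mul_lemma (by simp at hb; omega)] at this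
    show ((inflate n d τ (d * b)).1, ((inflate n d τ (d * b)).2 + 1)/d - 1) = τ b
    rw [inflate_coords hL hd0 hdn hdvd hτ hmem]
    have hb1 : 1 ≤ b := by simp at hb; omega
    have hq : (d * b - 1)/d = b - 1 := by
      rw [show d * b - 1 = d * (b-1) + (d-1) by
        have := mul_lemma (d := d) hb1; omega]
      rw [Nat.mul_add_div hd0, Nat.div_eq_of_lt (by omega)]
      omega
    have hm : (d * b - 1) % d = d - 1 := by
      rw [show d * b - 1 = d * (b-1) + (d-1) by
        have := mul_lemma (d := d) hb1; omega]
      rw [Nat.mul_add_mod]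
      exact Nat.mod_eq_of_lt (by omega)
    rw [hq, hm, show b - 1 + 1 = b by omega]
    show ((τ b).1, (d * (τ b).2 + (d-1) + 1)/d - 1) = τ b
    have : d * (τ b).2 + (d-1) + 1 = d * ((τ b).2 + 1) := by
      have h6 : d * ((τ b).2 + 1) = d * (τ b).2 + d := by ring
      omega
    rw [this, Nat.mul_div_cancel_left _ hd0]
    rw [Prod.ext_iff]
    exact ⟨rfl, by omega⟩
  · have hmem : d * b ∉ Set.Icc 1 n := by
      simp only [Set.mem_Icc, not_and_or, not_le] at hb ⊢
      rcases hb with h | h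
      · left
        have : b = 0 := by omega
        simp [this]
      · right
        obtain ⟨k, hk⟩ := hdn
        rw [hk]
        rw [hk, Nat.mul_div_cancel_left _ hd0] at h
        calc d * k < d * k + d := by omega
        _ = d * (k+1) := by ring
        _ ≤ d * b := Nat.mul_le_mul_left d (by omega)
    show ((inflate n d τ (d * b)).1, ((inflate n d τ (d * b)).2 + 1)/d - 1) = τ b
    rw [inflate, if_neg hmem, hτ.1.2.2 b hb]
    show ((0:ℕ), ((0:ℕ) + 1)/d - 1) = ((0:ℕ), (0:ℕ))
    rw [Prod.ext_iff]
    refine ⟨rfl, ?_⟩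
    rcases Nat.lt_or_ge d 2 with h | h
    · have : d = 1 := by omega
      simp [this]
    · rw [Nat.zero_add, Nat.div_eq_of_lt (by omega)]

end

end Inflate

section Final

variable {L : List ℕ} {n d : ℕ} {σ : ℕ → ℕ × ℕ} {τ : ℕ → ℕ × ℕ}

lemma cells_finite (L : List ℕ) : (cells L).Finite := by
  refine (Set.finite_Icc ((0,0) : ℕ × ℕ) (L.length, L.sum)).subset ?_
  rintro ⟨p, c⟩ ⟨h1, h2⟩
  simp only [Set.mem_Icc, Prod.le_def]
  have := part_le_sum (M := L) h1
  exact ⟨⟨Nat.zero_le _, Nat.zero_le _⟩, le_of_lt h1, by omega⟩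

lemma isRST_finite (L : List ℕ) (n : ℕ) : {σ : ℕ → ℕ × ℕ | IsRST L n σ}.Finite := by
  classical
  set D : Set (ℕ × ℕ) := insert (0,0) (cells L) with hD
  have hDfin : D.Finite := (cells_finite L).insert _
  set Φ : (ℕ → ℕ × ℕ) → (Fin (n+1) → ℕ × ℕ) := fun σ => fun k => σ k.val with hΦ
  have himg : Φ '' {σ : ℕ → ℕ × ℕ | IsRST L n σ} ⊆ Set.univ.pi (fun _ : Fin (n+1) => D) := by
    rintro f ⟨σ, hσ, rfl⟩
    intro k _
    by_cases hk : (k : ℕ) ∈ Set.Icc 1 n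
    · exact Set.mem_insert_of_mem _ (hσ.1.mem_cells hk)
    · rw [hΦ]
      simp only
      rw [hσ.1.2.2 _ hk]
      exact Set.mem_insert _ _
  have hinj : Set.InjOn Φ {σ : ℕ → ℕ × ℕ | IsRST L n σ} := by
    intro σ1 h1 σ2 h2 heq
    funext i
    by_cases hi : i ∈ Set.Icc 1 n
    · have hile : i < n + 1 := by simp at hi; omega
      have := congrFun heq ⟨i, hile⟩
      exact this
    · rw [h1.1.2.2 i hi, h2.1.2.2 i hi]
  exact Set.Finite.of_finite_image
    (((Set.Finite.pi (fun _ => hDfin)).subset himg)) hinj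

lemma quot_indivisible (hσ : IsRST L n σ) (hn : 0 < n) (hd0 : 0 < d)
    (hdm : dmax n σ = d) :
    ∀ e, 0 < e → TabDivisor (n/d) e (quotTab d σ) → e = 1 := by
  intro e he0 he
  have hd : TabDivisor n d σ := by rw [← hdm]; exact (dmax_spec hn).1
  have hup := TabDivisor.up hσ hd hd0 he
  have hle : e * d ≤ dmax n σ := dmax_le hn hup (Nat.mul_pos he0 hd0)
  rw [hdm] at hle
  by_contra hne
  have he2 : 2 ≤ e := by omega
  have := Nat.mul_le_mul_right d he2
  omega

lemma inflate_quotTab_eq (hσ : IsRST L n σ) (hd : TabDivisor n d σ) (hd0 : 0 < d) :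
    inflate n d (quotTab d σ) = σ := by
  funext i
  by_cases hi : i ∈ Set.Icc 1 n
  · rw [inflate, if_pos hi]
    obtain ⟨ha, hs, hieq⟩ := idx_decomp hd.1 hd0 hi
    simp only [Set.mem_Icc] at hs
    have hM := hd.master hσ hd0 (s := (i-1) % d + 1) ha (by omega) hs.2
    rw [← hieq] at hM
    rw [hM]
    rw [Prod.ext_iff]
    exact ⟨rfl, by simp⟩
  · rw [inflate, if_neg hi, hσ.1.2.2 i hi]

lemma inflate_dmax (hL : IsPartition L n) (hn : 0 < n) (hd0 : 0 < d) (hdn : d ∣ n)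
    (hdvd : ∀ p < L.length, d ∣ L.getD p 0)
    (hτ : IsRST (L.map (· / d)) (n/d) τ)
    (hind : ∀ e, 0 < e → TabDivisor (n/d) e τ → e = 1) :
    dmax n (inflate n d τ) = d := by
  have hdiv := inflate_div hL hd0 hdn hdvd hτ
  have hRST := inflate_isRST hL hd0 hdn hdvd hτ
  have hge : d ≤ dmax n (inflate n d τ) := dmax_le hn hdiv hd0
  obtain ⟨hD, hD1⟩ := dmax_spec (σ := inflate n d τ) hn
  set Dm := dmax n (inflate n d τ) with hDm
  set l := Nat.lcm d Dm with hl
  have hln : l ∣ n := Nat.lcm_dvd hdn hD.1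
  have hldiv : TabDivisor n l (inflate n d τ) := by
    refine ⟨hln, fun i hi1 hin hli => ?_⟩
    by_cases hdi : d ∣ i
    · by_cases hDi : Dm ∣ i
      · exact absurd (Nat.lcm_dvd hdi hDi) hli
      · exact hD.2 i hi1 hin hDi
    · exact hdiv.2 i hi1 hin hdi
  have hdl : d ∣ l := Nat.dvd_lcm_left _ _
  have hdown := TabDivisor.down hRST hdiv hd0 hldiv hdl
  rw [inflate_quot hL hd0 hdn hdvd hτ] at hdown
  have hl0 : 0 < l := by
    rcases Nat.eq_zero_or_pos l with h | h
    · exfalso; rw [h] at hln; have := Nat.eq_zero_of_zero_dvd hln; omega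
    · exact h
  have hld1 : l / d = 1 := by
    refine hind (l/d) ?_ hdown
    exact Nat.div_pos (Nat.le_of_dvd hl0 hdl) hd0
  have hleq : l = d := by
    obtain ⟨k, hk⟩ := hdl
    rw [hk, Nat.mul_div_cancel_left _ hd0] at hld1
    rw [hk, hld1, Nat.mul_one]
  have hDl : Dm ∣ l := Nat.dvd_lcm_right _ _
  rw [hleq] at hDl
  have := Nat.le_of_dvd hd0 hDl
  omega

end Final

/-- `P_λ(t) = Σ_{d | λ} t^{D_{λ,d}} Q_{λ/d}(t)`, where the sum runs over the positive
integers `d` dividing every part of `λ` (the divisors of the gcd of the parts) and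
`D_{λ,d} = Σ_i (i−1)λ_i − Σ_i (i−1)(λ_i/d) = ((d−1)/d)Σ_i (i−1)λ_i`. -/
theorem stmt15 (L : List ℕ) (n : ℕ) (hL : IsPartition L n) (hn : 0 < n) :
    Ppoly L n = ∑ d ∈ (L.foldr Nat.gcd 0).divisors,
      Polynomial.X ^ (dimB L - dimB (L.map (· / d))) * Qpoly (L.map (· / d)) (n / d) := by
  classical
  have hg0 : L.foldr Nat.gcd 0 ≠ 0 := gcd_ne_zero hL hn
  have hgn : L.foldr Nat.gcd 0 ∣ n := gcd_dvd_n hL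
  have hfin : {σ : ℕ → ℕ × ℕ | IsRST L n σ}.Finite := isRST_finite L n
  rw [Ppoly, ← Set.Finite.coe_toFinset hfin, finsum_mem_coe_finset]
  set T := hfin.toFinset with hT
  have hTbi : T = ((L.foldr Nat.gcd 0).divisors).biUnion
      (fun d => T.filter (fun σ => dmax n σ = d)) := by
    ext σ
    simp only [Finset.mem_biUnion, Finset.mem_filter]
    constructor
    · intro hσ
      refine ⟨dmax n σ, ?_, hσ, rfl⟩
      rw [Nat.mem_divisors]
      have hσ' : IsRST L n σ := by rwa [hT, Set.Finite.mem_toFinset] at hσ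
      exact ⟨dmax_dvd_gcd hL hn hσ', hg0⟩
    · rintro ⟨d, _, hσ, _⟩; exact hσ
  have hdisj : (↑(L.foldr Nat.gcd 0).divisors : Set ℕ).PairwiseDisjoint
      (fun d => T.filter (fun σ => dmax n σ = d)) := by
    intro d1 _ d2 _ hne
    refine Finset.disjoint_left.mpr ?_
    intro σ h1 h2
    rw [Finset.mem_filter] at h1 h2
    exact hne (h1.2 ▸ h2.2)
  rw [hTbi, Finset.sum_biUnion hdisj]
  refine Finset.sum_congr rfl (fun d hd => ?_)
  rw [Nat.mem_divisors] at hd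
  obtain ⟨hdg, _⟩ := hd
  have hd0 : 0 < d := Nat.pos_of_ne_zero (fun h => hg0 (by
    rw [h] at hdg; exact Nat.eq_zero_of_zero_dvd hdg))
  have hdn : d ∣ n := hdg.trans hgn
  have hdvd : ∀ p < L.length, d ∣ L.getD p 0 := by
    intro p hp
    refine hdg.trans (foldr_gcd_dvd ?_)
    rw [List.getD_eq_getElem _ _ hp]
    exact List.getElem_mem _
  have hLq := quot_isPartition hL hd0 hdvd
  have hfinQ : {σ : ℕ → ℕ × ℕ | IsRST (L.map (· / d)) (n/d) σ ∧
      ∀ e, 0 < e → TabDivisor (n/d) e σ → e = 1}.Finite :=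
    (isRST_finite (L.map (· / d)) (n/d)).subset (fun x hx => hx.1)
  rw [Qpoly, ← Set.Finite.coe_toFinset hfinQ, finsum_mem_coe_finset, Finset.mul_sum]
  -- exponent bookkeeping
  have hdim : dimB L = d * dimB (L.map (· / d)) := dimB_quot L hd0 hdvd
  have hΔ : dimB L - dimB (L.map (· / d)) = (d-1) * dimB (L.map (· / d)) := by
    rw [hdim, Nat.sub_mul, Nat.one_mul]
  refine Finset.sum_nbij' (fun σ => quotTab d σ) (fun τ => inflate n d τ) ?_ ?_ ?_ ?_ ?_
  · -- forward membership
    intro σ hσ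
    rw [Finset.mem_filter, hT, Set.Finite.mem_toFinset] at hσ
    obtain ⟨hσR, hσd⟩ := hσ
    rw [Set.Finite.mem_toFinset]
    have hdiv : TabDivisor n d σ := by rw [← hσd]; exact (dmax_spec hn).1
    exact ⟨hdiv.quot_isRST hσR hd0 hL.2.2, quot_indivisible hσR hn hd0 hσd⟩
  · -- backward membership
    intro τ hτ
    rw [Set.Finite.mem_toFinset] at hτ
    obtain ⟨hτR, hτind⟩ := hτ
    rw [Finset.mem_filter, hT, Set.Finite.mem_toFinset]
    exact ⟨inflate_isRST hL hd0 hdn hdvd hτR,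
      inflate_dmax hL hn hd0 hdn hdvd hτR hτind⟩
  · -- left inverse
    intro σ hσ
    rw [Finset.mem_filter, hT, Set.Finite.mem_toFinset] at hσ
    obtain ⟨hσR, hσd⟩ := hσ
    have hdiv : TabDivisor n d σ := by rw [← hσd]; exact (dmax_spec hn).1
    exact inflate_quotTab_eq hσR hdiv hd0
  · -- right inverse
    intro τ hτ
    rw [Set.Finite.mem_toFinset] at hτ
    exact inflate_quot hL hd0 hdn hdvd hτ.1
  · -- values
    intro σ hσ
    rw [Finset.mem_filter, hT, Set.Finite.mem_toFinset] at hσ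
    obtain ⟨hσR, hσd⟩ := hσ
    have hdiv : TabDivisor n d σ := by rw [← hσd]; exact (dmax_spec hn).1
    have hrel := invCount_rel hσR hdiv hd0
    have hpc : pairsCount (n/d) (quotTab d σ) = dimB (L.map (· / d)) :=
      pairsCount_eq_dimB (hdiv.quot_isRST hσR hd0 hL.2.2) hLq.1 hLq.2.1
    rw [← pow_add, hrel, hpc, hΔ]
    ring
end

section
/- Let σ be a row-strict tableau of shape λ ⊢ n, and suppose (i,j) with i > j is a Springer pair of σ that is not a Springer inversion. Then d divides both i and j for every divisor d of σ; in particular, both i and j label boxes at the end of their blocks. -/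
open scoped Classical

/-- Key lemma: columns are congruent to labels minus one, modulo a tableau divisor. -/
lemma colMod (L : List ℕ) (n : ℕ) (σ : ℕ → ℕ × ℕ) (hσ : IsTab L n σ)
    (d : ℕ) (hd : 0 < d) (hdiv : TabDivisor n d σ) :
    ∀ m, 1 ≤ m → m ≤ n → (σ m).2 % d = (m - 1) % d := by
  obtain ⟨hinj, himg, _⟩ := hσ
  obtain ⟨hdn, hstep⟩ := hdiv
  have walk : ∀ m, 1 ≤ m → m ≤ n → ∀ t, t ≤ (m - 1) % d →
      σ m = ((σ (m - t)).1, (σ (m - t)).2 + t) := by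
    intro m hm1 hmn t
    induction t with
    | zero => intro _; simp
    | succ t ih =>
      intro ht
      have h1 : σ m = ((σ (m - t)).1, (σ (m - t)).2 + t) := ih (by omega)
      have hmod : (m - 1) % d ≤ m - 1 := Nat.mod_le _ _
      have h2 := Nat.div_add_mod (m - 1) d
      have h3 : (m - 1) % d < d := Nat.mod_lt _ hd
      have hnd : ¬ d ∣ (m - t - 1) := by
        intro hdd
        have he : m - t - 1 = ((m - 1) % d - t) + d * ((m - 1) / d) := by omega
        have hmm : (m - t - 1) % d = (m - 1) % d - t := by
          rw [he, Nat.add_mul_mod_self_left, Nat.mod_eq_of_lt (by omega)]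
        have := (Nat.mod_eq_zero_of_dvd hdd)
        omega
      have hs := hstep (m - t - 1) (by omega) (by omega) hnd
      have hmt : m - t - 1 + 1 = m - t := by omega
      rw [hmt] at hs
      have hss : m - t - 1 = m - (t + 1) := by omega
      rw [h1, hs, hss]
      simp [Nat.add_assoc, Nat.add_comm 1 t]
  intro m hm1 hmn
  generalize hc : (σ m).2 = c
  induction c using Nat.strong_induction_on generalizing m with
  | _ c IH =>
    have hrlt : (m - 1) % d < d := Nat.mod_lt _ hd
    have hrle : (m - 1) % d ≤ m - 1 := Nat.mod_le _ _
    have hw := walk m hm1 hmn ((m - 1) % d) le_rfl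
    set r := (m - 1) % d with hr
    set s := m - r with hs
    have hs1 : 1 ≤ s := by omega
    have hsn : s ≤ n := by omega
    by_cases h0 : (σ s).2 = 0
    · have hcr : c = r := by rw [← hc, hw, h0]; simp
      rw [hcr, Nat.mod_eq_of_lt hrlt]
    · obtain ⟨c', hc'⟩ : ∃ c', (σ s).2 = c' + 1 := ⟨(σ s).2 - 1, by omega⟩
      have hscell : σ s ∈ cells L := by
        rw [← himg]; exact ⟨s, ⟨hs1, hsn⟩, rfl⟩
      have hcell : ((σ s).1, c') ∈ σ '' Set.Icc 1 n := by
        rw [himg]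
        exact ⟨hscell.1, by have := hscell.2; simp only at this ⊢; omega⟩
      obtain ⟨k, hk, hkpos⟩ := hcell
      have hk1 : 1 ≤ k := hk.1
      have hkn : k ≤ n := hk.2
      have hdvds : d ∣ s - 1 := ⟨(m - 1) / d, by
        have := Nat.div_add_mod (m - 1) d; omega⟩
      have hdk : d ∣ k := by
        by_contra hnk
        have hkln : k < n := by
          rcases Nat.lt_or_ge k n with h | h
          · exact h
          · exact absurd ((by omega : k = n) ▸ hdn) hnk
        have hstepk := hstep k hk1 hkln hnk
        rw [hkpos] at hstepk
        have heq : σ (k + 1) = σ s := by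
          rw [hstepk]; exact Prod.ext rfl hc'.symm
        have hks : k + 1 = s := hinj ⟨by omega, by omega⟩ ⟨hs1, hsn⟩ heq
        exact hnk (by rwa [show k = s - 1 by omega])
      have hck : (σ k).2 = c' := by rw [hkpos]
      have hcm : (σ m).2 = (σ s).2 + r := by rw [hw]
      have hc'lt : c' < c := by omega
      have hkmod := IH c' hc'lt k hk1 hkn hck
      obtain ⟨q, hq⟩ := hdk
      have hq1 : 1 ≤ q := by
        rcases Nat.eq_zero_or_pos q with h | h
        · subst h; simp at hq; omega
        · exact h
      have hmul : d * (q - 1) + d = d * q := by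
        rw [← Nat.mul_succ]; congr 1; omega
      have hkm : (k - 1) % d = d - 1 := by
        have hke : k - 1 = (d - 1) + d * (q - 1) := by omega
        rw [hke, Nat.add_mul_mod_self_left, Nat.mod_eq_of_lt (by omega)]
      have hc'e := Nat.div_add_mod c' d
      have hmul2 : d * (c' / d + 1) = d * (c' / d) + d := Nat.mul_succ d _
      have hce : c = r + d * (c' / d + 1) := by omega
      rw [hce, Nat.add_mul_mod_self_left, Nat.mod_eq_of_lt hrlt]

/-- If `(i, j)` is a Springer pair of a row-strict tableau `σ` that is not a Springer
inversion, then every divisor `d` of `σ` divides both `i` and `j`; in particular `i` and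
`j` label boxes at the end of their blocks. -/
theorem stmt19 (L : List ℕ) (n : ℕ) (hL : IsPartition L n) (σ : ℕ → ℕ × ℕ)
    (hσ : IsRST L n σ) (i j : ℕ) (hpair : SpringerPair n σ i j)
    (hnotinv : ¬ SpringerInv n σ i j) (d : ℕ) (hd : 0 < d) (hdiv : TabDivisor n d σ) :
    d ∣ i ∧ d ∣ j := by
  obtain ⟨hpj1, hji, hin, hcol, hrr⟩ := hpair
  have hne : ¬ ((σ i).2 = (σ j).2 → (σ j).1 < (σ i).1) :=
    fun h => hnotinv ⟨⟨hpj1, hji, hin, hcol, hrr⟩, h⟩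
  push_neg at hne
  obtain ⟨hceq, hrow⟩ := hne
  obtain ⟨hdn, hstep⟩ := hdiv
  have hdj : d ∣ j := by
    by_contra hnj
    have h1 := hstep j hpj1 (by omega) hnj
    have := hrr (j + 1) ⟨by omega, by omega⟩ h1
    omega
  refine ⟨?_, hdj⟩
  have hci := colMod L n σ hσ.1 d hd ⟨hdn, hstep⟩ i (by omega) hin
  have hcj := colMod L n σ hσ.1 d hd ⟨hdn, hstep⟩ j hpj1 (by omega)
  rw [hceq, hcj] at hci
  obtain ⟨q, hq⟩ := hdj
  have hq1 : 1 ≤ q := by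
    rcases Nat.eq_zero_or_pos q with h | h
    · subst h; simp at hq; omega
    · exact h
  have hmul : d * (q - 1) + d = d * q := by
    rw [← Nat.mul_succ]; congr 1; omega
  have hjm : (j - 1) % d = d - 1 := by
    have hke : j - 1 = (d - 1) + d * (q - 1) := by omega
    rw [hke, Nat.add_mul_mod_self_left, Nat.mod_eq_of_lt (by omega)]
  have hie := Nat.div_add_mod (i - 1) d
  have hmul2 : d * ((i - 1) / d + 1) = d * ((i - 1) / d) + d := Nat.mul_succ d _
  exact ⟨(i - 1) / d + 1, by omega⟩
end
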